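/- arXiv:1805.09887 — 2 statements merged into one kernel-verified Lean document; each statement's English description precedes it below -/
import Mathlib

section
/- Let I be an instance of SPA-ST and let J be the integer programming model of I. For every super-stable matching M in I there exists a feasible solution of J (an assignment of values in {0,1} to all the variables satisfying all twelve constraint families) in which x_{i,j} = 1 if and only if (s_i, p_j) ∈ M; in particular the objective value Σ_{acceptable (s_i,p_j)} x_{i,j} of this solution equals |M|. -/
open scoped Classical

/-- An instance of the Student-Project Allocation problem with lecturer
preferences over students, with Ties (SPA-ST).  `sPref s p q` means student `s`
ranks project `p` at least as highly as project `q` (`p ⪰_s q`); `lPref k t t'`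
means lecturer `k` ranks student `t` at least as highly as student `t'`. -/
structure SPAST (S P L : Type) [Fintype S] [Fintype P] [Fintype L]
    [DecidableEq S] [DecidableEq P] [DecidableEq L] where
  /-- the lecturer offering each project -/
  lec : P → L
  /-- project capacities -/
  c : P → ℕ
  /-- lecturer capacities -/
  d : L → ℕ
  cpos : ∀ p : P, 0 < c p
  dpos : ∀ k : L, 0 < d k
  /-- the set of projects acceptable to each student -/
  acc : S → Finset P
  sPref : S → P → P → Prop
  lPref : L → S → S → Prop
  sRefl : ∀ s : S, ∀ p ∈ acc s, sPref s p p
  sTrans : ∀ s : S, ∀ p ∈ acc s, ∀ q ∈ acc s, ∀ r ∈ acc s,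
    sPref s p q → sPref s q r → sPref s p r
  sTotal : ∀ s : S, ∀ p ∈ acc s, ∀ q ∈ acc s, sPref s p q ∨ sPref s q p
  lRefl : ∀ k : L, ∀ t : S, (∃ p ∈ acc t, lec p = k) → lPref k t t
  lTrans : ∀ k : L, ∀ t1 t2 t3 : S,
    (∃ p ∈ acc t1, lec p = k) → (∃ p ∈ acc t2, lec p = k) → (∃ p ∈ acc t3, lec p = k) →
    lPref k t1 t2 → lPref k t2 t3 → lPref k t1 t3
  lTotal : ∀ k : L, ∀ t1 t2 : S,
    (∃ p ∈ acc t1, lec p = k) → (∃ p ∈ acc t2, lec p = k) →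
    lPref k t1 t2 ∨ lPref k t2 t1
  capLB : ∀ p : P, c p ≤ d (lec p)
  capUB : ∀ k : L, d k ≤ ∑ p ∈ Finset.univ.filter (fun p => lec p = k), c p

namespace SPAST

variable {S P L : Type} [Fintype S] [Fintype P] [Fintype L]
  [DecidableEq S] [DecidableEq P] [DecidableEq L]

/-- `M` is a matching: pairs are acceptable, each student is matched at most once,
and project and lecturer capacities are respected. -/
def IsMatching (I : SPAST S P L) (M : Finset (S × P)) : Prop :=
  (∀ x ∈ M, x.2 ∈ I.acc x.1) ∧
  (∀ s : S, ∀ p q : P, (s, p) ∈ M → (s, q) ∈ M → p = q) ∧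
  (∀ p : P, (M.filter (fun x => x.2 = p)).card ≤ I.c p) ∧
  (∀ k : L, (M.filter (fun x => I.lec x.2 = k)).card ≤ I.d k)

/-- The set `M(p)` of students assigned to project `p` in `M`. -/
def projAsg (M : Finset (S × P)) (p : P) : Finset S :=
  (M.filter (fun x => x.2 = p)).image Prod.fst

/-- The set `M(l_k)` of students assigned to lecturer `k` in `M`. -/
def lecAsg (I : SPAST S P L) (M : Finset (S × P)) (k : L) : Finset S :=
  (M.filter (fun x => I.lec x.2 = k)).image Prod.fst

/-- `t` is a least-preferred (worst) student of lecturer `k` in the set `T`. -/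
def WorstIn (I : SPAST S P L) (k : L) (T : Finset S) (t : S) : Prop :=
  t ∈ T ∧ ∀ t' ∈ T, I.lPref k t' t

/-- `(s, p)` is a super-blocking pair for `M`. -/
def SuperBlocking (I : SPAST S P L) (M : Finset (S × P)) (s : S) (p : P) : Prop :=
  p ∈ I.acc s ∧ (s, p) ∉ M ∧
  (∀ q : P, (s, q) ∈ M → ¬(I.sPref s q p ∧ ¬I.sPref s p q)) ∧
  (((projAsg M p).card < I.c p ∧ (lecAsg I M (I.lec p)).card < I.d (I.lec p)) ∨
   ((projAsg M p).card < I.c p ∧ (lecAsg I M (I.lec p)).card = I.d (I.lec p) ∧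
     (s ∈ lecAsg I M (I.lec p) ∨
      ∃ t : S, WorstIn I (I.lec p) (lecAsg I M (I.lec p)) t ∧ I.lPref (I.lec p) s t)) ∨
   ((projAsg M p).card = I.c p ∧
     ∃ t : S, WorstIn I (I.lec p) (projAsg M p) t ∧ I.lPref (I.lec p) s t))

/-- `(s, p)` is a weakly-blocking pair for `M`. -/
def WeakBlocking (I : SPAST S P L) (M : Finset (S × P)) (s : S) (p : P) : Prop :=
  p ∈ I.acc s ∧ (s, p) ∉ M ∧
  (∀ q : P, (s, q) ∈ M → I.sPref s p q ∧ ¬I.sPref s q p) ∧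
  (((projAsg M p).card < I.c p ∧ (lecAsg I M (I.lec p)).card < I.d (I.lec p)) ∨
   ((projAsg M p).card < I.c p ∧ (lecAsg I M (I.lec p)).card = I.d (I.lec p) ∧
     (s ∈ lecAsg I M (I.lec p) ∨
      ∃ t : S, WorstIn I (I.lec p) (lecAsg I M (I.lec p)) t ∧
        (I.lPref (I.lec p) s t ∧ ¬I.lPref (I.lec p) t s))) ∨
   ((projAsg M p).card = I.c p ∧
     ∃ t : S, WorstIn I (I.lec p) (projAsg M p) t ∧
       (I.lPref (I.lec p) s t ∧ ¬I.lPref (I.lec p) t s)))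

/-- `M` is a super-stable matching in `I`. -/
def SuperStable (I : SPAST S P L) (M : Finset (S × P)) : Prop :=
  I.IsMatching M ∧ ∀ (s : S) (p : P), ¬SuperBlocking I M s p

/-- `M` is a weakly stable matching in `I`. -/
def WeaklyStable (I : SPAST S P L) (M : Finset (S × P)) : Prop :=
  I.IsMatching M ∧ ∀ (s : S) (p : P), ¬WeakBlocking I M s p

/-- `I` is an SPA-S instance: all preference lists are strictly ordered
(the preorders are antisymmetric). -/
def StrictPrefs (I : SPAST S P L) : Prop :=
  (∀ s : S, ∀ p ∈ I.acc s, ∀ q ∈ I.acc s, I.sPref s p q → I.sPref s q p → p = q) ∧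
  (∀ k : L, ∀ t t' : S, (∃ p ∈ I.acc t, I.lec p = k) → (∃ p ∈ I.acc t', I.lec p = k) →
    I.lPref k t t' → I.lPref k t' t → t = t')

/-- `I'` is an SPA-S instance obtained from `I` by breaking the ties. -/
def TieBreaking (I I' : SPAST S P L) : Prop :=
  I'.lec = I.lec ∧ I'.c = I.c ∧ I'.d = I.d ∧ I'.acc = I.acc ∧
  StrictPrefs I' ∧
  (∀ (s : S) (p q : P), I.sPref s p q → ¬I.sPref s q p →
    I'.sPref s p q ∧ ¬I'.sPref s q p) ∧
  (∀ (k : L) (t t' : S), I.lPref k t t' → ¬I.lPref k t' t →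
    I'.lPref k t t' ∧ ¬I'.lPref k t' t)

end SPAST

namespace SPAST

variable {S P L : Type} [Fintype S] [Fintype P] [Fintype L]
  [DecidableEq S] [DecidableEq P] [DecidableEq L]

/-- The variables of the integer programming model `J` of an SPA-ST instance. -/
structure IPSol (S P L : Type) where
  x : S → P → ℤ
  alpha : P → ℤ
  beta : L → ℤ
  eta : L → ℤ
  delta : S → L → ℤ
  gamma : P → ℤ
  lam : S → P → ℤ

/-- a value in {0,1} -/
def Bin (v : ℤ) : Prop := v = 0 ∨ v = 1

/-- θ_{i,j} = 1 − x_{i,j} − Σ_{p' ∈ S_{i,j}} x_{i,p'}, where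
`S_{i,j}` is the set of projects `s` strictly prefers to `p`. -/
noncomputable def theta (I : SPAST S P L) (sol : IPSol S P L) (s : S) (p : P) : ℤ :=
  1 - sol.x s p -
    ∑ p' ∈ (I.acc s).filter (fun p' => I.sPref s p' p ∧ ¬I.sPref s p p'), sol.x s p'

/-- `sol` is a feasible solution of the IP model `J` of `I`: all variables take
values in {0,1} and the twelve constraint families hold. -/
def Feasible (I : SPAST S P L) (sol : IPSol S P L) : Prop :=
  -- binary variables
  (∀ (s : S) (p : P), Bin (sol.x s p)) ∧
  (∀ p : P, Bin (sol.alpha p)) ∧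
  (∀ k : L, Bin (sol.beta k)) ∧
  (∀ k : L, Bin (sol.eta k)) ∧
  (∀ (s : S) (k : L), Bin (sol.delta s k)) ∧
  (∀ p : P, Bin (sol.gamma p)) ∧
  (∀ (s : S), ∀ p ∈ I.acc s, Bin (sol.lam s p)) ∧
  -- x variables exist only for acceptable pairs
  (∀ (s : S) (p : P), p ∉ I.acc s → sol.x s p = 0) ∧
  -- (1)
  (∀ s : S, ∑ p ∈ I.acc s, sol.x s p ≤ 1) ∧
  -- (2)
  (∀ p : P, ∑ s : S, sol.x s p ≤ (I.c p : ℤ)) ∧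
  -- (3)
  (∀ k : L, ∑ s : S, ∑ p ∈ Finset.univ.filter (fun p => I.lec p = k), sol.x s p
    ≤ (I.d k : ℤ)) ∧
  -- (4)
  (∀ p : P, (I.c p : ℤ) * sol.alpha p ≥ (I.c p : ℤ) - ∑ s : S, sol.x s p) ∧
  -- (5)
  (∀ k : L, (I.d k : ℤ) * sol.beta k ≥
    (I.d k : ℤ) - ∑ s : S, ∑ p ∈ Finset.univ.filter (fun p => I.lec p = k), sol.x s p) ∧
  -- (6)
  (∀ (s : S), ∀ p ∈ I.acc s,
    theta I sol s p + sol.alpha p + sol.beta (I.lec p) ≤ 2) ∧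
  -- (7)
  (∀ k : L, (I.d k : ℤ) * sol.eta k ≥
    1 + (∑ s : S, ∑ p ∈ Finset.univ.filter (fun p => I.lec p = k), sol.x s p)
      - (I.d k : ℤ)) ∧
  -- (8)
  (∀ (s : S) (k : L), (I.d k : ℤ) * sol.delta s k ≥
    (∑ s' : S, ∑ p ∈ Finset.univ.filter (fun p => I.lec p = k), sol.x s' p) -
    ∑ s' ∈ Finset.univ.filter (fun s' : S =>
        (∃ q ∈ I.acc s', I.lec q = k) ∧ I.lPref k s' s ∧ ¬I.lPref k s s'),
      ∑ p ∈ Finset.univ.filter (fun p => I.lec p = k), sol.x s' p) ∧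
  -- (9)
  (∀ (s : S), ∀ p ∈ I.acc s,
    theta I sol s p + sol.alpha p + sol.eta (I.lec p) + sol.delta s (I.lec p) ≤ 3) ∧
  -- (10)
  (∀ p : P, (I.c p : ℤ) * sol.gamma p ≥ 1 + (∑ s : S, sol.x s p) - (I.c p : ℤ)) ∧
  -- (11)
  (∀ (s : S), ∀ p ∈ I.acc s, (I.c p : ℤ) * sol.lam s p ≥
    (∑ s' : S, sol.x s' p) -
    ∑ s' ∈ Finset.univ.filter (fun s' : S =>
        p ∈ I.acc s' ∧ I.lPref (I.lec p) s' s ∧ ¬I.lPref (I.lec p) s s'),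
      sol.x s' p) ∧
  -- (12)
  (∀ (s : S), ∀ p ∈ I.acc s,
    theta I sol s p + sol.gamma p + sol.lam s p ≤ 2)

/-- The matching `{(s_i, p_j) : x_{i,j} = 1}` derived from an IP solution. -/
def matchOf (sol : IPSol S P L) : Finset (S × P) :=
  Finset.univ.filter (fun y : S × P => sol.x y.1 y.2 = 1)

end SPAST

namespace SPAST

variable {S P L : Type} [Fintype S] [Fintype P] [Fintype L]
  [DecidableEq S] [DecidableEq P] [DecidableEq L]

/-- Every nonempty finite set of students ranked by lecturer `k` has a
least-preferred ("worst") element. -/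
theorem exists_worst (I : SPAST S P L) (k : L) :
    ∀ T : Finset S, T.Nonempty → (∀ t ∈ T, ∃ p ∈ I.acc t, I.lec p = k) →
      ∃ t, I.WorstIn k T t := by
  intro T
  induction T using Finset.induction_on with
  | empty => intro hT _; exact absurd hT (by simp)
  | @insert a s ha ih =>
    intro _ hall
    rcases s.eq_empty_or_nonempty with rfl | hs
    · refine ⟨a, by simp, ?_⟩
      intro t' ht'
      simp only [Finset.mem_insert, Finset.notMem_empty, or_false] at ht'
      rw [ht']
      exact I.lRefl k a (hall a (by simp))
    · obtain ⟨t, htT, hmin⟩ := ih hs (fun t ht => hall t (Finset.mem_insert_of_mem ht))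
      have hak := hall a (Finset.mem_insert_self a s)
      have htk := hall t (Finset.mem_insert_of_mem htT)
      rcases I.lTotal k a t hak htk with hat | hta
      · refine ⟨t, Finset.mem_insert_of_mem htT, ?_⟩
        intro t' ht'
        rcases Finset.mem_insert.mp ht' with rfl | ht'
        · exact hat
        · exact hmin t' ht'
      · refine ⟨a, Finset.mem_insert_self a s, ?_⟩
        intro t' ht'
        rcases Finset.mem_insert.mp ht' with rfl | ht'
        · exact I.lRefl k t' hak
        · exact I.lTrans k t' t a (hall t' (Finset.mem_insert_of_mem ht')) htk hak
            (hmin t' ht') hta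

/-- The canonical IP solution associated to a matching `M`. -/
noncomputable def stSol (I : SPAST S P L) (M : Finset (S × P)) : IPSol S P L where
  x s p := if (s, p) ∈ M then 1 else 0
  alpha p := if (M.filter fun y => y.2 = p).card < I.c p then 1 else 0
  beta k := if (M.filter fun y => I.lec y.2 = k).card < I.d k then 1 else 0
  eta k := if (M.filter fun y => I.lec y.2 = k).card = I.d k then 1 else 0
  delta s k :=
    if ∃ y ∈ M, I.lec y.2 = k ∧ ¬(I.lPref k y.1 s ∧ ¬I.lPref k s y.1) then 1 else 0
  gamma p := if (M.filter fun y => y.2 = p).card = I.c p then 1 else 0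
  lam s p :=
    if ∃ y ∈ M, y.2 = p ∧ ¬(I.lPref (I.lec p) y.1 s ∧ ¬I.lPref (I.lec p) s y.1)
    then 1 else 0

theorem stSol_x (I : SPAST S P L) (M : Finset (S × P)) (s : S) (p : P) :
    (stSol I M).x s p = if (s, p) ∈ M then 1 else 0 := rfl

theorem stSol_alpha (I : SPAST S P L) (M : Finset (S × P)) (p : P) :
    (stSol I M).alpha p = if (M.filter fun y => y.2 = p).card < I.c p then 1 else 0 := rfl

theorem stSol_beta (I : SPAST S P L) (M : Finset (S × P)) (k : L) :
    (stSol I M).beta k = if (M.filter fun y => I.lec y.2 = k).card < I.d k then 1 else 0 := rfl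

theorem stSol_eta (I : SPAST S P L) (M : Finset (S × P)) (k : L) :
    (stSol I M).eta k = if (M.filter fun y => I.lec y.2 = k).card = I.d k then 1 else 0 := rfl

theorem stSol_delta (I : SPAST S P L) (M : Finset (S × P)) (s : S) (k : L) :
    (stSol I M).delta s k =
      if ∃ y ∈ M, I.lec y.2 = k ∧ ¬(I.lPref k y.1 s ∧ ¬I.lPref k s y.1) then 1 else 0 := rfl

theorem stSol_gamma (I : SPAST S P L) (M : Finset (S × P)) (p : P) :
    (stSol I M).gamma p = if (M.filter fun y => y.2 = p).card = I.c p then 1 else 0 := rfl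

theorem stSol_lam (I : SPAST S P L) (M : Finset (S × P)) (s : S) (p : P) :
    (stSol I M).lam s p =
      if ∃ y ∈ M, y.2 = p ∧ ¬(I.lPref (I.lec p) y.1 s ∧ ¬I.lPref (I.lec p) s y.1)
      then 1 else 0 := rfl

theorem ind_nonneg (M : Finset (S × P)) (s : S) (p : P) :
    (0 : ℤ) ≤ if (s, p) ∈ M then 1 else 0 := by split <;> norm_num

theorem theta_le_one (I : SPAST S P L) (M : Finset (S × P)) (s : S) (p : P) :
    theta I (stSol I M) s p ≤ 1 := by
  unfold theta
  have h1 : (0 : ℤ) ≤ (stSol I M).x s p := by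
    rw [stSol_x]; exact ind_nonneg M s p
  have h2 : (0 : ℤ) ≤ ∑ p' ∈ (I.acc s).filter
      (fun p' => I.sPref s p' p ∧ ¬I.sPref s p p'), (stSol I M).x s p' := by
    refine Finset.sum_nonneg fun q _ => ?_
    rw [stSol_x]; exact ind_nonneg M s q
  linarith

theorem theta_pos_facts (I : SPAST S P L) (M : Finset (S × P))
    (hacc : ∀ y ∈ M, y.2 ∈ I.acc y.1) (s : S) (p : P)
    (h : 0 < theta I (stSol I M) s p) :
    (s, p) ∉ M ∧ ∀ q : P, (s, q) ∈ M → ¬(I.sPref s q p ∧ ¬I.sPref s p q) := by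
  unfold theta at h
  have h1 : (0 : ℤ) ≤ (stSol I M).x s p := by
    rw [stSol_x]; exact ind_nonneg M s p
  have hnn : ∀ q ∈ (I.acc s).filter (fun p' => I.sPref s p' p ∧ ¬I.sPref s p p'),
      (0 : ℤ) ≤ (stSol I M).x s q := by
    intro q _; rw [stSol_x]; exact ind_nonneg M s q
  have h2 : (0 : ℤ) ≤ ∑ p' ∈ (I.acc s).filter
      (fun p' => I.sPref s p' p ∧ ¬I.sPref s p p'), (stSol I M).x s p' :=
    Finset.sum_nonneg hnn
  have hx0 : (stSol I M).x s p = 0 := le_antisymm (by linarith) h1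
  have hT0 : (∑ p' ∈ (I.acc s).filter
      (fun p' => I.sPref s p' p ∧ ¬I.sPref s p p'), (stSol I M).x s p') = 0 :=
    le_antisymm (by linarith) h2
  constructor
  · intro hm
    rw [stSol_x, if_pos hm] at hx0
    exact one_ne_zero hx0
  · intro q hq hstrict
    have hqacc : q ∈ I.acc s := hacc (s, q) hq
    have hqf : q ∈ (I.acc s).filter (fun p' => I.sPref s p' p ∧ ¬I.sPref s p p') :=
      Finset.mem_filter.mpr ⟨hqacc, hstrict⟩
    have := (Finset.sum_eq_zero_iff_of_nonneg hnn).mp hT0 q hqf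
    rw [stSol_x, if_pos hq] at this
    exact one_ne_zero this

end SPAST

open SPAST in
theorem super_stable_gives_feasible_solution {S P L : Type} [Fintype S] [Fintype P] [Fintype L]
    [DecidableEq S] [DecidableEq P] [DecidableEq L]
    (I : SPAST S P L) (M : Finset (S × P)) (h : SuperStable I M) :
    ∃ sol : IPSol S P L, Feasible I sol ∧
      (∀ (s : S) (p : P), sol.x s p = 1 ↔ (s, p) ∈ M) ∧
      (∑ s : S, ∑ p ∈ I.acc s, sol.x s p) = (M.card : ℤ) := by
  classical
  obtain ⟨⟨hacc, huniq, hpc, hlc⟩, hstab⟩ := h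
  -- counting lemmas
  have hpcard : ∀ p : P, (projAsg M p).card = (M.filter fun y => y.2 = p).card := by
    intro p
    unfold projAsg
    apply Finset.card_image_of_injOn
    intro a ha b hb hab
    simp only [Finset.coe_filter, Set.mem_setOf_eq] at ha hb
    obtain ⟨a1, a2⟩ := a
    obtain ⟨b1, b2⟩ := b
    simp only at hab
    subst hab
    simp only at ha hb
    rw [ha.2, hb.2]
  have hlcard : ∀ k : L, (lecAsg I M k).card = (M.filter fun y => I.lec y.2 = k).card := by
    intro k
    unfold lecAsg
    apply Finset.card_image_of_injOn
    intro a ha b hb hab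
    simp only [Finset.coe_filter, Set.mem_setOf_eq] at ha hb
    obtain ⟨a1, a2⟩ := a
    obtain ⟨b1, b2⟩ := b
    simp only at hab
    subst hab
    have := huniq a1 a2 b2 ha.1 hb.1
    rw [this]
  have hproj : ∀ p : P,
      (∑ s : S, if (s, p) ∈ M then (1 : ℤ) else 0)
        = ((M.filter fun y => y.2 = p).card : ℤ) := by
    intro p
    rw [Finset.sum_boole]
    congr 1
    refine Finset.card_bij (fun s _ => (s, p)) ?_ ?_ ?_
    · intro s hs
      simp only [Finset.mem_filter, Finset.mem_univ, true_and] at hs ⊢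
      exact ⟨hs, trivial⟩
    · intro a _ b _ hab
      exact congrArg Prod.fst hab
    · intro y hy
      simp only [Finset.mem_filter] at hy
      obtain ⟨y1, y2⟩ := y
      obtain ⟨hyM, hyp⟩ := hy
      subst hyp
      exact ⟨y1, by simp only [Finset.mem_filter, Finset.mem_univ, true_and]; exact hyM, rfl⟩
  have hlecsum : ∀ k : L,
      (∑ s : S, ∑ p ∈ Finset.univ.filter (fun p => I.lec p = k),
          if (s, p) ∈ M then (1 : ℤ) else 0)
        = ((M.filter fun y => I.lec y.2 = k).card : ℤ) := by
    intro k
    have h1 : ∀ s : S,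
        (∑ p ∈ Finset.univ.filter (fun p => I.lec p = k),
            if (s, p) ∈ M then (1 : ℤ) else 0)
          = (((Finset.univ.filter (fun p => I.lec p = k)).filter
              fun p => (s, p) ∈ M).card : ℤ) := by
      intro s; rw [Finset.sum_boole]
    rw [Finset.sum_congr rfl fun s _ => h1 s, ← Nat.cast_sum]
    congr 1
    have h2 := Finset.card_eq_sum_card_fiberwise
      (f := Prod.fst) (s := M.filter fun y => I.lec y.2 = k)
      (t := (Finset.univ : Finset S)) (fun y _ => Finset.mem_univ _)
    rw [h2]
    refine Finset.sum_congr rfl ?_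
    intro s _
    refine Finset.card_bij (fun p _ => (s, p)) ?_ ?_ ?_
    · intro p hp
      simp only [Finset.mem_filter, Finset.mem_univ, true_and] at hp ⊢
      exact ⟨⟨hp.2, hp.1⟩, trivial⟩
    · intro a _ b _ hab
      exact congrArg Prod.snd hab
    · intro y hy
      simp only [Finset.mem_filter] at hy
      obtain ⟨y1, y2⟩ := y
      obtain ⟨⟨hyM, hyl⟩, hy1⟩ := hy
      subst hy1
      exact ⟨y2, by simp only [Finset.mem_filter, Finset.mem_univ, true_and]; exact ⟨hyl, hyM⟩, rfl⟩
  have haccsum : ∀ s : S,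
      (∑ p ∈ I.acc s, if (s, p) ∈ M then (1 : ℤ) else 0)
        = (((I.acc s).filter fun p => (s, p) ∈ M).card : ℤ) := by
    intro s; rw [Finset.sum_boole]
  have haccle : ∀ s : S, ((I.acc s).filter fun p => (s, p) ∈ M).card ≤ 1 := by
    intro s
    refine Finset.card_le_one.mpr ?_
    intro a ha b hb
    simp only [Finset.mem_filter] at ha hb
    exact huniq s a b ha.2 hb.2
  refine ⟨stSol I M, ?_, ?_, ?_⟩
  · refine ⟨?_, ?_, ?_, ?_, ?_, ?_, ?_, ?_, ?_, ?_, ?_, ?_, ?_, ?_, ?_, ?_, ?_, ?_, ?_, ?_⟩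
    · intro s p; rw [stSol_x]; unfold Bin; split_ifs <;> simp
    · intro p; rw [stSol_alpha]; unfold Bin; split_ifs <;> simp
    · intro k; rw [stSol_beta]; unfold Bin; split_ifs <;> simp
    · intro k; rw [stSol_eta]; unfold Bin; split_ifs <;> simp
    · intro s k; rw [stSol_delta]; unfold Bin; split_ifs <;> simp
    · intro p; rw [stSol_gamma]; unfold Bin; split_ifs <;> simp
    · intro s p _; rw [stSol_lam]; unfold Bin; split_ifs <;> simp
    · -- x zero for unacceptable pairs
      intro s p hps
      rw [stSol_x, if_neg]
      intro hm
      exact hps (hacc (s, p) hm)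
    · -- (1)
      intro s
      simp only [stSol_x]
      rw [haccsum s]
      exact_mod_cast haccle s
    · -- (2)
      intro p
      simp only [stSol_x]
      rw [hproj p]
      exact_mod_cast hpc p
    · -- (3)
      intro k
      simp only [stSol_x]
      rw [hlecsum k]
      exact_mod_cast hlc k
    · -- (4)
      intro p
      simp only [stSol_x, stSol_alpha]
      rw [hproj p]
      have hN : (0 : ℤ) ≤ ((M.filter fun y => y.2 = p).card : ℤ) := Int.natCast_nonneg _
      by_cases hα : (M.filter fun y => y.2 = p).card < I.c p
      · rw [if_pos hα, mul_one]; linarith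
      · rw [if_neg hα, mul_zero]
        have : (I.c p : ℤ) ≤ ((M.filter fun y => y.2 = p).card : ℤ) := by
          exact_mod_cast Nat.le_of_not_lt hα
        linarith
    · -- (5)
      intro k
      simp only [stSol_x, stSol_beta]
      rw [hlecsum k]
      have hN : (0 : ℤ) ≤ ((M.filter fun y => I.lec y.2 = k).card : ℤ) := Int.natCast_nonneg _
      by_cases hβ : (M.filter fun y => I.lec y.2 = k).card < I.d k
      · rw [if_pos hβ, mul_one]; linarith
      · rw [if_neg hβ, mul_zero]
        have : (I.d k : ℤ) ≤ ((M.filter fun y => I.lec y.2 = k).card : ℤ) := by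
          exact_mod_cast Nat.le_of_not_lt hβ
        linarith
    · -- (6)
      intro s p hp
      by_cases hα : (M.filter fun y => y.2 = p).card < I.c p
      · by_cases hβ : (M.filter fun y => I.lec y.2 = I.lec p).card < I.d (I.lec p)
        · have hth : theta I (stSol I M) s p ≤ 0 := by
            by_contra hcon
            push_neg at hcon
            obtain ⟨hnm, hnb⟩ := theta_pos_facts I M hacc s p hcon
            refine hstab s p ⟨hp, hnm, hnb, Or.inl ⟨?_, ?_⟩⟩
            · rw [hpcard p]; exact hα
            · rw [hlcard (I.lec p)]; exact hβ
          rw [stSol_alpha, stSol_beta, if_pos hα, if_pos hβ]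
          linarith
        · rw [stSol_alpha, stSol_beta, if_neg hβ]
          have := theta_le_one I M s p
          split_ifs <;> linarith
      · rw [stSol_alpha, stSol_beta, if_neg hα]
        have := theta_le_one I M s p
        split_ifs <;> linarith
    · -- (7)
      intro k
      simp only [stSol_x, stSol_eta]
      rw [hlecsum k]
      by_cases hη : (M.filter fun y => I.lec y.2 = k).card = I.d k
      · rw [if_pos hη, mul_one]
        have h1 : ((M.filter fun y => I.lec y.2 = k).card : ℤ) = (I.d k : ℤ) := by
          exact_mod_cast hη
        have h2 : (1 : ℤ) ≤ (I.d k : ℤ) := by exact_mod_cast I.dpos k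
        linarith
      · rw [if_neg hη, mul_zero]
        have h1 : (M.filter fun y => I.lec y.2 = k).card < I.d k :=
          lt_of_le_of_ne (hlc k) hη
        have h2 : ((M.filter fun y => I.lec y.2 = k).card : ℤ) + 1 ≤ (I.d k : ℤ) := by
          exact_mod_cast h1
        linarith
    · -- (8)
      intro s k
      simp only [stSol_x, stSol_delta]
      by_cases hδ : ∃ y ∈ M, I.lec y.2 = k ∧ ¬(I.lPref k y.1 s ∧ ¬I.lPref k s y.1)
      · rw [if_pos hδ, mul_one]
        have h1 : (∑ s' : S, ∑ p ∈ Finset.univ.filter (fun p => I.lec p = k),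
            if (s', p) ∈ M then (1 : ℤ) else 0) ≤ (I.d k : ℤ) := by
          rw [hlecsum k]; exact_mod_cast hlc k
        have h2 : (0 : ℤ) ≤ ∑ s' ∈ Finset.univ.filter (fun s' : S =>
            (∃ q ∈ I.acc s', I.lec q = k) ∧ I.lPref k s' s ∧ ¬I.lPref k s s'),
            ∑ p ∈ Finset.univ.filter (fun p => I.lec p = k),
              if (s', p) ∈ M then (1 : ℤ) else 0 :=
          Finset.sum_nonneg fun s' _ =>
            Finset.sum_nonneg fun q _ => ind_nonneg M s' q
        linarith
      · rw [if_neg hδ, mul_zero]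
        push_neg at hδ
        have heq : (∑ s' ∈ Finset.univ.filter (fun s' : S =>
            (∃ q ∈ I.acc s', I.lec q = k) ∧ I.lPref k s' s ∧ ¬I.lPref k s s'),
            ∑ p ∈ Finset.univ.filter (fun p => I.lec p = k),
              if (s', p) ∈ M then (1 : ℤ) else 0)
            = ∑ s' : S, ∑ p ∈ Finset.univ.filter (fun p => I.lec p = k),
                if (s', p) ∈ M then (1 : ℤ) else 0 := by
          refine Finset.sum_subset (Finset.subset_univ _) ?_
          intro s' _ hs'
          refine Finset.sum_eq_zero ?_
          intro q hq
          simp only [Finset.mem_filter, Finset.mem_univ, true_and] at hq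
          have hnm : (s', q) ∉ M := by
            intro hmem
            apply hs'
            simp only [Finset.mem_filter, Finset.mem_univ, true_and]
            exact ⟨⟨q, hacc (s', q) hmem, hq⟩, hδ (s', q) hmem hq⟩
          rw [if_neg hnm]
        rw [heq]
        simp
    · -- (9)
      intro s p hp
      by_cases hα : (M.filter fun y => y.2 = p).card < I.c p
      · by_cases hη : (M.filter fun y => I.lec y.2 = I.lec p).card = I.d (I.lec p)
        · by_cases hδ : ∃ y ∈ M, I.lec y.2 = I.lec p ∧
              ¬(I.lPref (I.lec p) y.1 s ∧ ¬I.lPref (I.lec p) s y.1)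
          · have hth : theta I (stSol I M) s p ≤ 0 := by
              by_contra hcon
              push_neg at hcon
              obtain ⟨hnm, hnb⟩ := theta_pos_facts I M hacc s p hcon
              obtain ⟨y, hyM, hylec, hyns⟩ := hδ
              have hy1 : y.1 ∈ lecAsg I M (I.lec p) :=
                Finset.mem_image.mpr ⟨y, Finset.mem_filter.mpr ⟨hyM, hylec⟩, rfl⟩
              have hsrank : ∃ q ∈ I.acc s, I.lec q = I.lec p := ⟨p, hp, rfl⟩
              have hyrank : ∃ q ∈ I.acc y.1, I.lec q = I.lec p :=
                ⟨y.2, hacc y hyM, hylec⟩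
              have hallr : ∀ t ∈ lecAsg I M (I.lec p), ∃ q ∈ I.acc t, I.lec q = I.lec p := by
                intro t ht
                obtain ⟨y', hy', rfl⟩ := Finset.mem_image.mp ht
                have h' := Finset.mem_filter.mp hy'
                exact ⟨y'.2, hacc y' h'.1, h'.2⟩
              have hsy : I.lPref (I.lec p) s y.1 := by
                rcases I.lTotal (I.lec p) y.1 s hyrank hsrank with h1 | h1
                · by_contra h2; exact hyns ⟨h1, h2⟩
                · exact h1
              obtain ⟨t, hworst⟩ := exists_worst I (I.lec p) _ ⟨y.1, hy1⟩ hallr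
              have hst : I.lPref (I.lec p) s t :=
                I.lTrans (I.lec p) s y.1 t hsrank hyrank (hallr t hworst.1) hsy
                  (hworst.2 y.1 hy1)
              refine hstab s p ⟨hp, hnm, hnb, Or.inr (Or.inl ⟨?_, ?_,
                Or.inr ⟨t, hworst, hst⟩⟩)⟩
              · rw [hpcard p]; exact hα
              · rw [hlcard (I.lec p)]; exact hη
            rw [stSol_alpha, stSol_eta, stSol_delta, if_pos hα, if_pos hη, if_pos hδ]
            linarith
          · rw [stSol_alpha, stSol_eta, stSol_delta, if_neg hδ]
            have := theta_le_one I M s p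
            split_ifs <;> linarith
        · rw [stSol_alpha, stSol_eta, stSol_delta, if_neg hη]
          have := theta_le_one I M s p
          split_ifs <;> linarith
      · rw [stSol_alpha, stSol_eta, stSol_delta, if_neg hα]
        have := theta_le_one I M s p
        split_ifs <;> linarith
    · -- (10)
      intro p
      simp only [stSol_x, stSol_gamma]
      rw [hproj p]
      by_cases hγ : (M.filter fun y => y.2 = p).card = I.c p
      · rw [if_pos hγ, mul_one]
        have h1 : ((M.filter fun y => y.2 = p).card : ℤ) = (I.c p : ℤ) := by
          exact_mod_cast hγ
        have h2 : (1 : ℤ) ≤ (I.c p : ℤ) := by exact_mod_cast I.cpos p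
        linarith
      · rw [if_neg hγ, mul_zero]
        have h1 : (M.filter fun y => y.2 = p).card < I.c p :=
          lt_of_le_of_ne (hpc p) hγ
        have h2 : ((M.filter fun y => y.2 = p).card : ℤ) + 1 ≤ (I.c p : ℤ) := by
          exact_mod_cast h1
        linarith
    · -- (11)
      intro s p hp
      simp only [stSol_x, stSol_lam]
      by_cases hlam : ∃ y ∈ M, y.2 = p ∧
          ¬(I.lPref (I.lec p) y.1 s ∧ ¬I.lPref (I.lec p) s y.1)
      · rw [if_pos hlam, mul_one]
        have h1 : (∑ s' : S, if (s', p) ∈ M then (1 : ℤ) else 0) ≤ (I.c p : ℤ) := by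
          rw [hproj p]; exact_mod_cast hpc p
        have h2 : (0 : ℤ) ≤ ∑ s' ∈ Finset.univ.filter (fun s' : S =>
            p ∈ I.acc s' ∧ I.lPref (I.lec p) s' s ∧ ¬I.lPref (I.lec p) s s'),
            if (s', p) ∈ M then (1 : ℤ) else 0 :=
          Finset.sum_nonneg fun s' _ => ind_nonneg M s' p
        linarith
      · rw [if_neg hlam, mul_zero]
        push_neg at hlam
        have heq : (∑ s' ∈ Finset.univ.filter (fun s' : S =>
            p ∈ I.acc s' ∧ I.lPref (I.lec p) s' s ∧ ¬I.lPref (I.lec p) s s'),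
            if (s', p) ∈ M then (1 : ℤ) else 0)
            = ∑ s' : S, if (s', p) ∈ M then (1 : ℤ) else 0 := by
          refine Finset.sum_subset (Finset.subset_univ _) ?_
          intro s' _ hs'
          have hnm : (s', p) ∉ M := by
            intro hmem
            apply hs'
            simp only [Finset.mem_filter, Finset.mem_univ, true_and]
            exact ⟨hacc (s', p) hmem, hlam (s', p) hmem rfl⟩
          rw [if_neg hnm]
        rw [heq]
        simp
    · -- (12)
      intro s p hp
      by_cases hγ : (M.filter fun y => y.2 = p).card = I.c p
      · by_cases hlam : ∃ y ∈ M, y.2 = p ∧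
            ¬(I.lPref (I.lec p) y.1 s ∧ ¬I.lPref (I.lec p) s y.1)
        · have hth : theta I (stSol I M) s p ≤ 0 := by
            by_contra hcon
            push_neg at hcon
            obtain ⟨hnm, hnb⟩ := theta_pos_facts I M hacc s p hcon
            obtain ⟨y, hyM, hyp, hyns⟩ := hlam
            have hy2acc : p ∈ I.acc y.1 := by rw [← hyp]; exact hacc y hyM
            have hy1 : y.1 ∈ projAsg M p :=
              Finset.mem_image.mpr ⟨y, Finset.mem_filter.mpr ⟨hyM, hyp⟩, rfl⟩
            have hsrank : ∃ q ∈ I.acc s, I.lec q = I.lec p := ⟨p, hp, rfl⟩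
            have hyrank : ∃ q ∈ I.acc y.1, I.lec q = I.lec p := ⟨p, hy2acc, rfl⟩
            have hallr : ∀ t ∈ projAsg M p, ∃ q ∈ I.acc t, I.lec q = I.lec p := by
              intro t ht
              obtain ⟨y', hy', rfl⟩ := Finset.mem_image.mp ht
              have h' := Finset.mem_filter.mp hy'
              refine ⟨p, ?_, rfl⟩
              rw [← h'.2]
              exact hacc y' h'.1
            have hsy : I.lPref (I.lec p) s y.1 := by
              rcases I.lTotal (I.lec p) y.1 s hyrank hsrank with h1 | h1
              · by_contra h2; exact hyns ⟨h1, h2⟩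
              · exact h1
            obtain ⟨t, hworst⟩ := exists_worst I (I.lec p) _ ⟨y.1, hy1⟩ hallr
            have hst : I.lPref (I.lec p) s t :=
              I.lTrans (I.lec p) s y.1 t hsrank hyrank (hallr t hworst.1) hsy
                (hworst.2 y.1 hy1)
            refine hstab s p ⟨hp, hnm, hnb, Or.inr (Or.inr ⟨?_, t, hworst, hst⟩)⟩
            rw [hpcard p]; exact hγ
          rw [stSol_gamma, stSol_lam, if_pos hγ, if_pos hlam]
          linarith
        · rw [stSol_gamma, stSol_lam, if_neg hlam]
          have := theta_le_one I M s p
          split_ifs <;> linarith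
      · rw [stSol_gamma, stSol_lam, if_neg hγ]
        have := theta_le_one I M s p
        split_ifs <;> linarith
  · -- the iff
    intro s p
    rw [stSol_x]
    split_ifs with hm
    · simp [hm]
    · simp [hm]
  · -- objective value
    simp only [stSol_x]
    rw [Finset.sum_congr rfl fun s _ => haccsum s, ← Nat.cast_sum]
    congr 1
    have h2 := Finset.card_eq_sum_card_fiberwise
      (f := Prod.fst) (s := M) (t := (Finset.univ : Finset S)) (fun y _ => Finset.mem_univ _)
    rw [h2]
    refine (Finset.sum_congr rfl ?_).symm
    intro s _
    refine (Finset.card_bij (fun p _ => (s, p)) ?_ ?_ ?_).symm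
    · intro p hp
      simp only [Finset.mem_filter] at hp ⊢
      exact ⟨hp.2, trivial⟩
    · intro a _ b _ hab
      exact congrArg Prod.snd hab
    · intro y hy
      simp only [Finset.mem_filter] at hy
      obtain ⟨y1, y2⟩ := y
      obtain ⟨hyM, hy1⟩ := hy
      subst hy1
      exact ⟨y2, Finset.mem_filter.mpr ⟨hacc (y1, y2) hyM, hyM⟩, rfl⟩
end

section
/- Let I be an instance of SPA-ST that admits a super-stable matching. Then for any two weakly stable matchings M1 and M2 in I, exactly the same students are matched in M1 and M2; consequently |M1| = |M2|. -/
open scoped Classical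

namespace SPASTAux
open SPAST Finset
set_option linter.unusedSectionVars false

variable {S P L : Type} [Fintype S] [Fintype P] [Fintype L]
  [DecidableEq S] [DecidableEq P] [DecidableEq L]

/-- strict preference of lecturer `k` -/
def SL (I : SPAST S P L) (k : L) (a b : S) : Prop := I.lPref k a b ∧ ¬ I.lPref k b a

/-- `t` finds some project of lecturer `k` acceptable -/
def AccAt (I : SPAST S P L) (k : L) (t : S) : Prop := ∃ p ∈ I.acc t, I.lec p = k

lemma worst_exists (I : SPAST S P L) (k : L) :
    ∀ (T : Finset S), T.Nonempty → (∀ t ∈ T, AccAt I k t) → ∃ t, I.WorstIn k T t := by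
  intro T
  induction T using Finset.induction_on with
  | empty => intro h; exact absurd h (by simp)
  | insert a T ha ih =>
    intro _ hacc
    rcases T.eq_empty_or_nonempty with rfl | hne
    · refine ⟨a, by simp, ?_⟩
      intro t' ht'
      simp only [Finset.mem_insert, Finset.mem_singleton] at ht'
      rcases ht' with rfl | h
      · exact I.lRefl k t' (hacc t' (by simp))
      · simp at h
    · obtain ⟨t, htT, hworst⟩ := ih hne (fun t ht => hacc t (Finset.mem_insert_of_mem ht))
      have hacct : AccAt I k t := hacc t (Finset.mem_insert_of_mem htT)
      have hacca : AccAt I k a := hacc a (Finset.mem_insert_self a T)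
      rcases I.lTotal k a t hacca hacct with h | h
      · refine ⟨t, Finset.mem_insert_of_mem htT, ?_⟩
        intro t' ht'
        rcases Finset.mem_insert.1 ht' with rfl | ht'
        · exact h
        · exact hworst t' ht'
      · refine ⟨a, Finset.mem_insert_self a T, ?_⟩
        intro t' ht'
        rcases Finset.mem_insert.1 ht' with rfl | ht'
        · exact I.lRefl k t' hacca
        · exact I.lTrans k t' t a (hacc t' (Finset.mem_insert_of_mem ht')) hacct hacca
            (hworst t' ht') h

lemma mem_projAsg {M : Finset (S × P)} {s : S} {p : P} :
    s ∈ projAsg M p ↔ (s, p) ∈ M := by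
  unfold projAsg
  simp only [Finset.mem_image, Finset.mem_filter]
  constructor
  · rintro ⟨⟨a, b⟩, ⟨hm, hb⟩, rfl⟩
    subst hb; exact hm
  · intro h; exact ⟨(s, p), ⟨h, rfl⟩, rfl⟩

lemma mem_lecAsg {I : SPAST S P L} {M : Finset (S × P)} {s : S} {k : L} :
    s ∈ lecAsg I M k ↔ ∃ p, (s, p) ∈ M ∧ I.lec p = k := by
  unfold lecAsg
  simp only [Finset.mem_image, Finset.mem_filter]
  constructor
  · rintro ⟨⟨a, b⟩, ⟨hm, hb⟩, rfl⟩
    exact ⟨b, hm, hb⟩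
  · rintro ⟨p, hm, hp⟩; exact ⟨(s, p), ⟨hm, hp⟩, rfl⟩

lemma card_projAsg (M : Finset (S × P)) (p : P) :
    (projAsg M p).card = (M.filter (fun x => x.2 = p)).card := by
  unfold projAsg
  apply Finset.card_image_of_injOn
  intro x hx y hy hxy
  simp only [Finset.coe_filter, Set.mem_setOf_eq] at hx hy
  exact Prod.ext hxy (hx.2.trans hy.2.symm)

lemma card_lecAsg {I : SPAST S P L} {M : Finset (S × P)} (hM : I.IsMatching M) (k : L) :
    (lecAsg I M k).card = (M.filter (fun x => I.lec x.2 = k)).card := by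
  unfold lecAsg
  apply Finset.card_image_of_injOn
  intro x hx y hy hxy
  simp only [Finset.coe_filter, Set.mem_setOf_eq] at hx hy
  exact Prod.ext hxy (hM.2.1 x.1 x.2 y.2 (by simpa using hx.1) (by rw [hxy]; simpa using hy.1))

end SPASTAux

namespace SPASTAux
open SPAST Finset
set_option linter.unusedSectionVars false

variable {S P L : Type} [Fintype S] [Fintype P] [Fintype L]
  [DecidableEq S] [DecidableEq P] [DecidableEq L]

/-- certificate extracted from super-stability for a pair of `M' \ M`
whose student does not strictly prefer her `M`-project. -/
lemma certA {I : SPAST S P L} {M M' : Finset (S × P)}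
    (hM : SuperStable I M) (hM' : I.IsMatching M')
    {u : S} {q : P} (huq : (u, q) ∈ M') (hnot : (u, q) ∉ M)
    (hA : ∀ r, (u, r) ∈ M → ¬(I.sPref u r q ∧ ¬ I.sPref u q r)) :
    ((projAsg M q).card = I.c q ∧ ∀ w ∈ projAsg M q, SL I (I.lec q) w u) ∨
    ((projAsg M q).card ≠ I.c q ∧ (lecAsg I M (I.lec q)).card = I.d (I.lec q) ∧
      ∀ w ∈ lecAsg I M (I.lec q), SL I (I.lec q) w u) := by
  set k := I.lec q with hk
  have haccu : AccAt I k u := ⟨q, hM'.1 (u, q) huq, rfl⟩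
  have hblock := hM.2 u q
  have h4 : ¬ ((((projAsg M q).card < I.c q ∧ (lecAsg I M k).card < I.d k) ∨
      ((projAsg M q).card < I.c q ∧ (lecAsg I M k).card = I.d k ∧
        (u ∈ lecAsg I M k ∨
         ∃ t : S, I.WorstIn k (lecAsg I M k) t ∧ I.lPref k u t)) ∨
      ((projAsg M q).card = I.c q ∧
         ∃ t : S, I.WorstIn k (projAsg M q) t ∧ I.lPref k u t))) := by
    intro h
    exact hblock ⟨hM'.1 (u, q) huq, hnot, hA, h⟩
  have h1 := fun h => h4 (Or.inl h)
  have h2 := fun h => h4 (Or.inr (Or.inl h))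
  have h3 := fun h => h4 (Or.inr (Or.inr h))
  have hqle : (projAsg M q).card ≤ I.c q := by
    rw [card_projAsg]; exact hM.1.2.2.1 q
  by_cases hq : (projAsg M q).card = I.c q
  · left
    refine ⟨hq, ?_⟩
    -- the worst student of M(q)
    have hne : (projAsg M q).Nonempty := by
      rw [← Finset.card_pos, hq]; exact I.cpos q
    have haccT : ∀ t ∈ projAsg M q, AccAt I k t := by
      intro t ht
      exact ⟨q, hM.1.1 (t, q) (mem_projAsg.1 ht), rfl⟩
    obtain ⟨t, htw⟩ := worst_exists I k _ hne haccT
    have hut : ¬ I.lPref k u t := fun hc => h3 ⟨hq, t, htw, hc⟩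
    have htu : I.lPref k t u :=
      (I.lTotal k u t haccu (haccT t htw.1)).resolve_left hut
    intro w hw
    have hwt : I.lPref k w t := htw.2 w hw
    refine ⟨I.lTrans k w t u (haccT w hw) (haccT t htw.1) haccu hwt htu, ?_⟩
    intro huw
    exact hut (I.lTrans k u w t haccu (haccT w hw) (haccT t htw.1) huw hwt)
  · right
    have hqlt : (projAsg M q).card < I.c q := lt_of_le_of_ne hqle hq
    have hdle : (lecAsg I M k).card ≤ I.d k := by
      rw [card_lecAsg hM.1]; exact hM.1.2.2.2 k
    have hdk : (lecAsg I M k).card = I.d k := by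
      rcases lt_or_eq_of_le hdle with h | h
      · exact absurd ⟨hqlt, h⟩ h1
      · exact h
    refine ⟨hq, hdk, ?_⟩
    have hW : ∀ t, I.WorstIn k (lecAsg I M k) t → ¬ I.lPref k u t :=
      fun t ht hc => h2 ⟨hqlt, hdk, Or.inr ⟨t, ht, hc⟩⟩
    have hne : (lecAsg I M k).Nonempty := by
      rw [← Finset.card_pos, hdk]; exact I.dpos k
    have haccT : ∀ t ∈ lecAsg I M k, AccAt I k t := by
      intro t ht
      obtain ⟨p, hp, hlp⟩ := mem_lecAsg.1 ht
      exact ⟨p, hM.1.1 (t, p) hp, hlp⟩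
    obtain ⟨t, htw⟩ := worst_exists I k _ hne haccT
    have hut : ¬ I.lPref k u t := hW t htw
    have htu : I.lPref k t u :=
      (I.lTotal k u t haccu (haccT t htw.1)).resolve_left hut
    intro w hw
    have hwt : I.lPref k w t := htw.2 w hw
    refine ⟨I.lTrans k w t u (haccT w hw) (haccT t htw.1) haccu hwt htu, ?_⟩
    intro huw
    exact hut (I.lTrans k u w t haccu (haccT w hw) (haccT t htw.1) huw hwt)

/-- certificate extracted from weak stability for a pair of `M \ M'`
whose student strictly prefers it to her `M'`-project (or is unmatched). -/
lemma certB {I : SPAST S P L} {M M' : Finset (S × P)}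
    (hM' : WeaklyStable I M') (hM : I.IsMatching M)
    {w : S} {p : P} (hwp : (w, p) ∈ M) (hnot : (w, p) ∉ M')
    (hB : ∀ r, (w, r) ∈ M' → (I.sPref w p r ∧ ¬ I.sPref w r p)) :
    ((projAsg M' p).card = I.c p ∧ ∀ u ∈ projAsg M' p, I.lPref (I.lec p) u w) ∨
    ((projAsg M' p).card ≠ I.c p ∧ (lecAsg I M' (I.lec p)).card = I.d (I.lec p) ∧
      ∀ u ∈ lecAsg I M' (I.lec p), I.lPref (I.lec p) u w) := by
  set k := I.lec p with hk
  have haccw : AccAt I k w := ⟨p, hM.1 (w, p) hwp, rfl⟩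
  have hblock := hM'.2 w p
  have h4 : ¬ ((((projAsg M' p).card < I.c p ∧ (lecAsg I M' k).card < I.d k) ∨
      ((projAsg M' p).card < I.c p ∧ (lecAsg I M' k).card = I.d k ∧
        (w ∈ lecAsg I M' k ∨
         ∃ t : S, I.WorstIn k (lecAsg I M' k) t ∧
           (I.lPref k w t ∧ ¬ I.lPref k t w))) ∨
      ((projAsg M' p).card = I.c p ∧
         ∃ t : S, I.WorstIn k (projAsg M' p) t ∧
           (I.lPref k w t ∧ ¬ I.lPref k t w)))) := by
    intro h
    exact hblock ⟨hM.1 (w, p) hwp, hnot, hB, h⟩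
  have h1 := fun h => h4 (Or.inl h)
  have h2 := fun h => h4 (Or.inr (Or.inl h))
  have h3 := fun h => h4 (Or.inr (Or.inr h))
  have hqle : (projAsg M' p).card ≤ I.c p := by
    rw [card_projAsg]; exact hM'.1.2.2.1 p
  by_cases hq : (projAsg M' p).card = I.c p
  · left
    refine ⟨hq, ?_⟩
    have hne : (projAsg M' p).Nonempty := by
      rw [← Finset.card_pos, hq]; exact I.cpos p
    have haccT : ∀ t ∈ projAsg M' p, AccAt I k t := by
      intro t ht
      exact ⟨p, hM'.1.1 (t, p) (mem_projAsg.1 ht), rfl⟩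
    obtain ⟨t, htw⟩ := worst_exists I k _ hne haccT
    have htw' : I.lPref k t w := by
      rcases Classical.em (I.lPref k w t) with h | h
      · by_contra htw''
        exact h3 ⟨hq, t, htw, h, htw''⟩
      · exact (I.lTotal k w t haccw (haccT t htw.1)).resolve_left h
    intro u hu
    exact I.lTrans k u t w (haccT u hu) (haccT t htw.1) haccw (htw.2 u hu) htw'
  · right
    have hqlt : (projAsg M' p).card < I.c p := lt_of_le_of_ne hqle hq
    have hdle : (lecAsg I M' k).card ≤ I.d k := by
      rw [card_lecAsg hM'.1]; exact hM'.1.2.2.2 k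
    have hdk : (lecAsg I M' k).card = I.d k := by
      rcases lt_or_eq_of_le hdle with h | h
      · exact absurd ⟨hqlt, h⟩ h1
      · exact h
    refine ⟨hq, hdk, ?_⟩
    have hW : ∀ t, I.WorstIn k (lecAsg I M' k) t →
        ¬ (I.lPref k w t ∧ ¬ I.lPref k t w) :=
      fun t ht hc => h2 ⟨hqlt, hdk, Or.inr ⟨t, ht, hc⟩⟩
    have hne : (lecAsg I M' k).Nonempty := by
      rw [← Finset.card_pos, hdk]; exact I.dpos k
    have haccT : ∀ t ∈ lecAsg I M' k, AccAt I k t := by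
      intro t ht
      obtain ⟨r, hr, hlr⟩ := mem_lecAsg.1 ht
      exact ⟨r, hM'.1.1 (t, r) hr, hlr⟩
    obtain ⟨t, htw⟩ := worst_exists I k _ hne haccT
    have htw' : I.lPref k t w := by
      rcases Classical.em (I.lPref k w t) with h | h
      · by_contra htw''
        exact (hW t htw) ⟨h, htw''⟩
      · exact (I.lTotal k w t haccw (haccT t htw.1)).resolve_left h
    intro u hu
    exact I.lTrans k u t w (haccT u hu) (haccT t htw.1) haccw (htw.2 u hu) htw'

end SPASTAux

namespace SPASTAux
open SPAST Finset
set_option linter.unusedSectionVars false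

variable {S P L : Type} [Fintype S] [Fintype P] [Fintype L]
  [DecidableEq S] [DecidableEq P] [DecidableEq L]

/-- a super-certified pair and a weak-certified pair on the same project conflict -/
lemma conflictProj {I : SPAST S P L} {M M' : Finset (S × P)}
    (hM : SuperStable I M) (hM' : WeaklyStable I M')
    {u w : S} {q : P} (huq : (u, q) ∈ M') (huqn : (u, q) ∉ M)
    (hA : ∀ r, (u, r) ∈ M → ¬(I.sPref u r q ∧ ¬ I.sPref u q r))
    (hwq : (w, q) ∈ M) (hwqn : (w, q) ∉ M')
    (hB : ∀ r, (w, r) ∈ M' → (I.sPref w q r ∧ ¬ I.sPref w r q)) : False := by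
  have hca := certA hM hM'.1 huq huqn hA
  have hcb := certB hM' hM.1 hwq hwqn hB
  have hSL : SL I (I.lec q) w u := by
    rcases hca with ⟨-, hdom⟩ | ⟨-, -, hdom⟩
    · exact hdom w (mem_projAsg.2 hwq)
    · exact hdom w (mem_lecAsg.2 ⟨q, hwq, rfl⟩)
  have hlpref : I.lPref (I.lec q) u w := by
    rcases hcb with ⟨-, hdom⟩ | ⟨-, -, hdom⟩
    · exact hdom u (mem_projAsg.2 huq)
    · exact hdom u (mem_lecAsg.2 ⟨q, huq, rfl⟩)
  exact hSL.2 hlpref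

/-- lecturer-level conflict between under-subscribed-project certificates -/
lemma conflictLec {I : SPAST S P L} {M M' : Finset (S × P)}
    (hM : SuperStable I M) (hM' : WeaklyStable I M')
    {u w : S} {qa qb : P} (huq : (u, qa) ∈ M') (huqn : (u, qa) ∉ M)
    (hA : ∀ r, (u, r) ∈ M → ¬(I.sPref u r qa ∧ ¬ I.sPref u qa r))
    (hanc : (projAsg M qa).card ≠ I.c qa)
    (hwq : (w, qb) ∈ M) (hwqn : (w, qb) ∉ M')
    (hB : ∀ r, (w, r) ∈ M' → (I.sPref w qb r ∧ ¬ I.sPref w r qb))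
    (hbnc : (projAsg M' qb).card ≠ I.c qb)
    (hlecs : I.lec qa = I.lec qb) : False := by
  have hca := (certA hM hM'.1 huq huqn hA).resolve_left (fun h => hanc h.1)
  have hcb := (certB hM' hM.1 hwq hwqn hB).resolve_left (fun h => hbnc h.1)
  have hSL : SL I (I.lec qa) w u :=
    hca.2.2 w (mem_lecAsg.2 ⟨qb, hwq, hlecs.symm⟩)
  have hlpref : I.lPref (I.lec qb) u w :=
    hcb.2.2 u (mem_lecAsg.2 ⟨qa, huq, hlecs⟩)
  rw [hlecs] at hSL
  exact hSL.2 hlpref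

end SPASTAux

namespace SPASTAux
open SPAST Finset
set_option linter.unusedSectionVars false

variable {S P L : Type} [Fintype S] [Fintype P] [Fintype L]
  [DecidableEq S] [DecidableEq P] [DecidableEq L]

lemma card_filter_sdiff_add (X Y : Finset (S × P)) (Pr : S × P → Prop) [DecidablePred Pr] :
    ((X \ Y).filter Pr).card + ((X ∩ Y).filter Pr).card = (X.filter Pr).card := by
  rw [← Finset.card_union_of_disjoint, ← Finset.filter_union, Finset.sdiff_union_inter]
  exact Finset.disjoint_filter_filter
    (Finset.sdiff_disjoint.mono_right Finset.inter_subset_right)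

lemma DE_le (X Y : Finset (S × P)) (Pr : S × P → Prop) [DecidablePred Pr]
    (h : (Y.filter Pr).card ≤ (X.filter Pr).card) :
    ((Y \ X).filter Pr).card ≤ ((X \ Y).filter Pr).card := by
  have h1 := card_filter_sdiff_add X Y Pr
  have h2 := card_filter_sdiff_add Y X Pr
  rw [Finset.inter_comm] at h2
  omega

lemma sum_fiber (I : SPAST S P L) {F : Finset (S × P)} {k : L}
    (h : ∀ x ∈ F, I.lec x.2 = k) :
    F.card = ∑ p ∈ Finset.univ.filter (fun p => I.lec p = k),
      (F.filter (fun x => x.2 = p)).card := by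
  apply Finset.card_eq_sum_card_fiberwise
  intro x hx
  simp only [Finset.coe_filter, Finset.mem_coe, Finset.mem_filter, Finset.mem_univ, true_and, Set.mem_setOf_eq]
  exact h x hx

lemma sum_lec (I : SPAST S P L) (F : Finset (S × P)) :
    F.card = ∑ k ∈ (Finset.univ : Finset L),
      (F.filter (fun x => I.lec x.2 = k)).card := by
  apply Finset.card_eq_sum_card_fiberwise
  intro x _
  exact Finset.mem_univ _

lemma filter_snd_eq (I : SPAST S P L) {F : Finset (S × P)} {k : L} {p : P}
    (hp : I.lec p = k) :
    (F.filter (fun x => I.lec x.2 = k)).filter (fun x => x.2 = p)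
      = F.filter (fun x => x.2 = p) := by
  ext x
  simp only [Finset.mem_filter, and_assoc]
  constructor
  · rintro ⟨h1, -, h3⟩; exact ⟨h1, h3⟩
  · rintro ⟨h1, h3⟩; exact ⟨h1, by rw [h3, hp], h3⟩

end SPASTAux

namespace SPASTAux
open SPAST Finset
set_option linter.unusedSectionVars false
set_option maxHeartbeats 1000000

variable {S P L : Type} [Fintype S] [Fintype P] [Fintype L]
  [DecidableEq S] [DecidableEq P] [DecidableEq L]

lemma star (I : SPAST S P L) (X Y : Finset (S × P)) (PA PB : S → P → Prop)
    (hXm : I.IsMatching X) (hYm : I.IsMatching Y)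
    (hC1 : ∀ u w q, (u, q) ∈ Y → (u, q) ∉ X → PA u q →
      (w, q) ∈ X → (w, q) ∉ Y → PB w q → False)
    (hC2 : ∀ u q w p, (u, q) ∈ Y → (u, q) ∉ X → PA u q →
      (X.filter (fun x => x.2 = q)).card ≠ I.c q →
      (w, p) ∈ X → (w, p) ∉ Y → PB w p →
      (Y.filter (fun x => x.2 = p)).card ≠ I.c p →
      I.lec q = I.lec p → False)
    (hFullB : ∀ w p, (w, p) ∈ X → (w, p) ∉ Y → PB w p →
      (Y.filter (fun x => x.2 = p)).card ≠ I.c p →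
      (Y.filter (fun x => I.lec x.2 = I.lec p)).card = I.d (I.lec p))
    (k : L) :
    (((X \ Y).filter (fun x => I.lec x.2 = k)).filter (fun x => PB x.1 x.2)).card +
      (((Y \ X).filter (fun x => I.lec x.2 = k)).filter
        (fun x => PA x.1 x.2 ∧ ∃ r, (x.1, r) ∈ X)).card
      ≤ ((Y \ X).filter (fun x => I.lec x.2 = k)).card := by
  classical
  set Dk := (Y \ X).filter (fun x => I.lec x.2 = k) with hDkdef
  set Ek := (X \ Y).filter (fun x => I.lec x.2 = k) with hEkdef
  set Bk := Ek.filter (fun x => PB x.1 x.2) with hBkdef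
  set nBk := Ek.filter (fun x => ¬ PB x.1 x.2) with hnBkdef
  set SAk := Dk.filter (fun x => PA x.1 x.2 ∧ ∃ r, (x.1, r) ∈ X) with hSAkdef
  have hBk_lec : ∀ x ∈ Bk, I.lec x.2 = k :=
    fun x hx => (Finset.mem_filter.1 (Finset.mem_filter.1 hx).1).2
  have hSAk_lec : ∀ x ∈ SAk, I.lec x.2 = k :=
    fun x hx => (Finset.mem_filter.1 (Finset.mem_filter.1 hx).1).2
  have hDk_lec : ∀ x ∈ Dk, I.lec x.2 = k := fun x hx => (Finset.mem_filter.1 hx).2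
  have hnBk_lec : ∀ x ∈ nBk, I.lec x.2 = k :=
    fun x hx => (Finset.mem_filter.1 (Finset.mem_filter.1 hx).1).2
  by_cases hbb : ∃ w p, (w, p) ∈ X ∧ (w, p) ∉ Y ∧ PB w p ∧ I.lec p = k ∧
      (Y.filter (fun x => x.2 = p)).card ≠ I.c p
  · obtain ⟨w0, p0, hw0X, hw0Y, hw0PB, hw0k, hw0nc⟩ := hbb
    have hYfull : (Y.filter (fun x => I.lec x.2 = k)).card = I.d k := by
      have h := hFullB w0 p0 hw0X hw0Y hw0PB hw0nc
      rwa [hw0k] at h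
    have h3 : Ek.card ≤ Dk.card := by
      rw [hEkdef, hDkdef]
      apply DE_le Y X
      rw [hYfull]
      exact hXm.2.2.2 k
    have h2 : Bk.card + nBk.card = Ek.card :=
      Finset.card_filter_add_card_filter_not (p := fun x : S × P => PB x.1 x.2)
    have h1 : SAk.card ≤ nBk.card := by
      rw [sum_fiber I hSAk_lec, sum_fiber I hnBk_lec]
      apply Finset.sum_le_sum
      intro p hp
      have hpk : I.lec p = k := (Finset.mem_filter.1 hp).2
      by_cases hSA : (SAk.filter (fun x => x.2 = p)).Nonempty
      · obtain ⟨x0, hx0⟩ := hSA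
        have hx0' := Finset.mem_filter.1 hx0
        have hx0p : x0.2 = p := hx0'.2
        have hx0SA := Finset.mem_filter.1 hx0'.1
        have hx0D := Finset.mem_filter.1 hx0SA.1
        have hx0Y : x0 ∈ Y := (Finset.mem_sdiff.1 hx0D.1).1
        have hx0X : x0 ∉ X := (Finset.mem_sdiff.1 hx0D.1).2
        have hPAx0 : PA x0.1 x0.2 := hx0SA.2.1
        have hXc : (X.filter (fun x => x.2 = p)).card = I.c p := by
          by_contra hc
          refine hC2 x0.1 x0.2 w0 p0 hx0Y hx0X hPAx0 ?_ hw0X hw0Y hw0PB hw0nc ?_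
          · rw [hx0p]; exact hc
          · rw [hx0p, hpk, hw0k]
        have hBempty : Bk.filter (fun x => x.2 = p) = ∅ := by
          apply Finset.eq_empty_of_forall_notMem
          intro y hy
          have hy' := Finset.mem_filter.1 hy
          have hyp : y.2 = p := hy'.2
          have hyB := Finset.mem_filter.1 hy'.1
          have hyE := Finset.mem_filter.1 hyB.1
          have hyX : y ∈ X := (Finset.mem_sdiff.1 hyE.1).1
          have hyY : y ∉ Y := (Finset.mem_sdiff.1 hyE.1).2
          refine hC1 x0.1 y.1 p ?_ ?_ ?_ ?_ ?_ ?_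
          · rw [← hx0p]; exact hx0Y
          · rw [← hx0p]; exact hx0X
          · rw [← hx0p]; exact hPAx0
          · rw [← hyp]; exact hyX
          · rw [← hyp]; exact hyY
          · rw [← hyp]; exact hyB.2
        have hnBp : nBk.filter (fun x => x.2 = p) = Ek.filter (fun x => x.2 = p) := by
          ext y
          constructor
          · intro hy
            have hy' := Finset.mem_filter.1 hy
            exact Finset.mem_filter.2 ⟨(Finset.mem_filter.1 hy'.1).1, hy'.2⟩
          · intro hy
            have hy' := Finset.mem_filter.1 hy
            refine Finset.mem_filter.2 ⟨Finset.mem_filter.2 ⟨hy'.1, ?_⟩, hy'.2⟩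
            intro hPBy
            have : y ∈ Bk.filter (fun x => x.2 = p) :=
              Finset.mem_filter.2 ⟨Finset.mem_filter.2 ⟨hy'.1, hPBy⟩, hy'.2⟩
            rw [hBempty] at this
            exact absurd this (Finset.notMem_empty y)
        calc (SAk.filter (fun x => x.2 = p)).card
            ≤ (Dk.filter (fun x => x.2 = p)).card :=
              Finset.card_le_card (Finset.filter_subset_filter _ (Finset.filter_subset _ _))
          _ = ((Y \ X).filter (fun x => x.2 = p)).card := by
              rw [hDkdef, filter_snd_eq I hpk]
          _ ≤ ((X \ Y).filter (fun x => x.2 = p)).card := by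
              apply DE_le X Y
              rw [hXc]
              exact hYm.2.2.1 p
          _ = (Ek.filter (fun x => x.2 = p)).card := by
              rw [hEkdef, filter_snd_eq I hpk]
          _ = (nBk.filter (fun x => x.2 = p)).card := by rw [hnBp]
      · rw [Finset.not_nonempty_iff_eq_empty.1 hSA]
        simp
    omega
  · push_neg at hbb
    rw [sum_fiber I hBk_lec, sum_fiber I hSAk_lec, sum_fiber I hDk_lec,
      ← Finset.sum_add_distrib]
    apply Finset.sum_le_sum
    intro p hp
    have hpk : I.lec p = k := (Finset.mem_filter.1 hp).2
    by_cases hBp : (Bk.filter (fun x => x.2 = p)).Nonempty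
    · obtain ⟨y0, hy0⟩ := hBp
      have hy0' := Finset.mem_filter.1 hy0
      have hy0p : y0.2 = p := hy0'.2
      have hy0B := Finset.mem_filter.1 hy0'.1
      have hy0E := Finset.mem_filter.1 hy0B.1
      have hy0X : y0 ∈ X := (Finset.mem_sdiff.1 hy0E.1).1
      have hy0Y : y0 ∉ Y := (Finset.mem_sdiff.1 hy0E.1).2
      have hYc : (Y.filter (fun x => x.2 = p)).card = I.c p := by
        have h := hbb y0.1 y0.2 hy0X hy0Y hy0B.2 (by rw [hy0p]; exact hpk)
        rwa [hy0p] at h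
      have hSAempty : SAk.filter (fun x => x.2 = p) = ∅ := by
        apply Finset.eq_empty_of_forall_notMem
        intro x hx
        have hx' := Finset.mem_filter.1 hx
        have hxp : x.2 = p := hx'.2
        have hxSA := Finset.mem_filter.1 hx'.1
        have hxD := Finset.mem_filter.1 hxSA.1
        have hxY : x ∈ Y := (Finset.mem_sdiff.1 hxD.1).1
        have hxX : x ∉ X := (Finset.mem_sdiff.1 hxD.1).2
        refine hC1 x.1 y0.1 p ?_ ?_ ?_ ?_ ?_ ?_
        · rw [← hxp]; exact hxY
        · rw [← hxp]; exact hxX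
        · rw [← hxp]; exact hxSA.2.1
        · rw [← hy0p]; exact hy0X
        · rw [← hy0p]; exact hy0Y
        · rw [← hy0p]; exact hy0B.2
      rw [hSAempty]
      simp only [Finset.card_empty, add_zero]
      calc (Bk.filter (fun x => x.2 = p)).card
          ≤ (Ek.filter (fun x => x.2 = p)).card :=
            Finset.card_le_card (Finset.filter_subset_filter _ (Finset.filter_subset _ _))
        _ = ((X \ Y).filter (fun x => x.2 = p)).card := by
            rw [hEkdef, filter_snd_eq I hpk]
        _ ≤ ((Y \ X).filter (fun x => x.2 = p)).card := by
            apply DE_le Y X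
            rw [hYc]
            exact hXm.2.2.1 p
        _ = (Dk.filter (fun x => x.2 = p)).card := by
            rw [hDkdef, filter_snd_eq I hpk]
    · rw [Finset.not_nonempty_iff_eq_empty.1 hBp]
      simp only [Finset.card_empty, zero_add]
      exact Finset.card_le_card (Finset.filter_subset_filter _ (Finset.filter_subset _ _))

end SPASTAux

namespace SPASTAux
open SPAST Finset
set_option linter.unusedSectionVars false
set_option maxHeartbeats 1000000

variable {S P L : Type} [Fintype S] [Fintype P] [Fintype L]
  [DecidableEq S] [DecidableEq P] [DecidableEq L]

lemma star_lt (I : SPAST S P L) (X Y : Finset (S × P)) (PA PB : S → P → Prop)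
    (hXm : I.IsMatching X) (hYm : I.IsMatching Y)
    (hC1 : ∀ u w q, (u, q) ∈ Y → (u, q) ∉ X → PA u q →
      (w, q) ∈ X → (w, q) ∉ Y → PB w q → False)
    (hC2 : ∀ u q w p, (u, q) ∈ Y → (u, q) ∉ X → PA u q →
      (X.filter (fun x => x.2 = q)).card ≠ I.c q →
      (w, p) ∈ X → (w, p) ∉ Y → PB w p →
      (Y.filter (fun x => x.2 = p)).card ≠ I.c p →
      I.lec q = I.lec p → False)
    (hFullB : ∀ w p, (w, p) ∈ X → (w, p) ∉ Y → PB w p →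
      (Y.filter (fun x => x.2 = p)).card ≠ I.c p →
      (Y.filter (fun x => I.lec x.2 = I.lec p)).card = I.d (I.lec p))
    (s0 : S) (q0 : P) (hs0Y : (s0, q0) ∈ Y) (hs0X : (s0, q0) ∉ X)
    (hPA0 : PA s0 q0) (hun : ∀ r, (s0, r) ∉ X) :
    (((X \ Y).filter (fun x => I.lec x.2 = I.lec q0)).filter
        (fun x => PB x.1 x.2)).card +
      (((Y \ X).filter (fun x => I.lec x.2 = I.lec q0)).filter
        (fun x => PA x.1 x.2 ∧ ∃ r, (x.1, r) ∈ X)).card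
      < ((Y \ X).filter (fun x => I.lec x.2 = I.lec q0)).card := by
  classical
  set k := I.lec q0 with hkdef
  set Dk := (Y \ X).filter (fun x => I.lec x.2 = k) with hDkdef
  set Ek := (X \ Y).filter (fun x => I.lec x.2 = k) with hEkdef
  set Bk := Ek.filter (fun x => PB x.1 x.2) with hBkdef
  set nBk := Ek.filter (fun x => ¬ PB x.1 x.2) with hnBkdef
  set SAk := Dk.filter (fun x => PA x.1 x.2 ∧ ∃ r, (x.1, r) ∈ X) with hSAkdef
  have hBk_lec : ∀ x ∈ Bk, I.lec x.2 = k :=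
    fun x hx => (Finset.mem_filter.1 (Finset.mem_filter.1 hx).1).2
  have hSAk_lec : ∀ x ∈ SAk, I.lec x.2 = k :=
    fun x hx => (Finset.mem_filter.1 (Finset.mem_filter.1 hx).1).2
  have hDk_lec : ∀ x ∈ Dk, I.lec x.2 = k := fun x hx => (Finset.mem_filter.1 hx).2
  have hnBk_lec : ∀ x ∈ nBk, I.lec x.2 = k :=
    fun x hx => (Finset.mem_filter.1 (Finset.mem_filter.1 hx).1).2
  have hq0FK : q0 ∈ Finset.univ.filter (fun p => I.lec p = k) := by
    simp [hkdef]
  have hx0Dkq0 : (s0, q0) ∈ Dk.filter (fun x => x.2 = q0) := by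
    refine Finset.mem_filter.2 ⟨Finset.mem_filter.2 ⟨Finset.mem_sdiff.2 ⟨hs0Y, hs0X⟩, rfl⟩, rfl⟩
  have hx0nSA : (s0, q0) ∉ SAk.filter (fun x => x.2 = q0) := by
    intro hmem
    have h' := Finset.mem_filter.1 (Finset.mem_filter.1 hmem).1
    obtain ⟨r, hr⟩ := h'.2.2
    exact hun r hr
  have hSAq0sub : SAk.filter (fun x => x.2 = q0) ⊆ Dk.filter (fun x => x.2 = q0) :=
    Finset.filter_subset_filter _ (Finset.filter_subset _ _)
  have hSAq0lt : (SAk.filter (fun x => x.2 = q0)).card < (Dk.filter (fun x => x.2 = q0)).card := by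
    apply Finset.card_lt_card
    rw [Finset.ssubset_iff_of_subset hSAq0sub]
    exact ⟨(s0, q0), hx0Dkq0, hx0nSA⟩
  by_cases hbb : ∃ w p, (w, p) ∈ X ∧ (w, p) ∉ Y ∧ PB w p ∧ I.lec p = k ∧
      (Y.filter (fun x => x.2 = p)).card ≠ I.c p
  · obtain ⟨w0, p0, hw0X, hw0Y, hw0PB, hw0k, hw0nc⟩ := hbb
    have hYfull : (Y.filter (fun x => I.lec x.2 = k)).card = I.d k := by
      have h := hFullB w0 p0 hw0X hw0Y hw0PB hw0nc
      rwa [hw0k] at h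
    have h3 : Ek.card ≤ Dk.card := by
      rw [hEkdef, hDkdef]
      apply DE_le Y X
      rw [hYfull]
      exact hXm.2.2.2 k
    have h2 : Bk.card + nBk.card = Ek.card :=
      Finset.card_filter_add_card_filter_not (p := fun x : S × P => PB x.1 x.2)
    have hXc0 : (X.filter (fun x => x.2 = q0)).card = I.c q0 := by
      by_contra hc
      exact hC2 s0 q0 w0 p0 hs0Y hs0X hPA0 hc hw0X hw0Y hw0PB hw0nc hw0k.symm
    have hBq0empty : Bk.filter (fun x => x.2 = q0) = ∅ := by
      apply Finset.eq_empty_of_forall_notMem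
      intro y hy
      have hy' := Finset.mem_filter.1 hy
      have hyp : y.2 = q0 := hy'.2
      have hyB := Finset.mem_filter.1 hy'.1
      have hyE := Finset.mem_filter.1 hyB.1
      have hyX : y ∈ X := (Finset.mem_sdiff.1 hyE.1).1
      have hyY : y ∉ Y := (Finset.mem_sdiff.1 hyE.1).2
      refine hC1 s0 y.1 q0 hs0Y hs0X hPA0 ?_ ?_ ?_
      · rw [← hyp]; exact hyX
      · rw [← hyp]; exact hyY
      · rw [← hyp]; exact hyB.2
    have hnBq0 : nBk.filter (fun x => x.2 = q0) = Ek.filter (fun x => x.2 = q0) := by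
      ext y
      constructor
      · intro hy
        have hy' := Finset.mem_filter.1 hy
        exact Finset.mem_filter.2 ⟨(Finset.mem_filter.1 hy'.1).1, hy'.2⟩
      · intro hy
        have hy' := Finset.mem_filter.1 hy
        refine Finset.mem_filter.2 ⟨Finset.mem_filter.2 ⟨hy'.1, ?_⟩, hy'.2⟩
        intro hPBy
        have : y ∈ Bk.filter (fun x => x.2 = q0) :=
          Finset.mem_filter.2 ⟨Finset.mem_filter.2 ⟨hy'.1, hPBy⟩, hy'.2⟩
        rw [hBq0empty] at this
        exact absurd this (Finset.notMem_empty y)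
    have h1 : SAk.card < nBk.card := by
      rw [sum_fiber I hSAk_lec, sum_fiber I hnBk_lec]
      apply Finset.sum_lt_sum
      · intro p hp
        have hpk : I.lec p = k := (Finset.mem_filter.1 hp).2
        by_cases hSA : (SAk.filter (fun x => x.2 = p)).Nonempty
        · obtain ⟨x0, hx0⟩ := hSA
          have hx0' := Finset.mem_filter.1 hx0
          have hx0p : x0.2 = p := hx0'.2
          have hx0SA := Finset.mem_filter.1 hx0'.1
          have hx0D := Finset.mem_filter.1 hx0SA.1
          have hx0Y : x0 ∈ Y := (Finset.mem_sdiff.1 hx0D.1).1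
          have hx0X : x0 ∉ X := (Finset.mem_sdiff.1 hx0D.1).2
          have hPAx0 : PA x0.1 x0.2 := hx0SA.2.1
          have hXc : (X.filter (fun x => x.2 = p)).card = I.c p := by
            by_contra hc
            refine hC2 x0.1 x0.2 w0 p0 hx0Y hx0X hPAx0 ?_ hw0X hw0Y hw0PB hw0nc ?_
            · rw [hx0p]; exact hc
            · rw [hx0p, hpk, hw0k]
          have hBempty : Bk.filter (fun x => x.2 = p) = ∅ := by
            apply Finset.eq_empty_of_forall_notMem
            intro y hy
            have hy' := Finset.mem_filter.1 hy
            have hyp : y.2 = p := hy'.2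
            have hyB := Finset.mem_filter.1 hy'.1
            have hyE := Finset.mem_filter.1 hyB.1
            have hyX : y ∈ X := (Finset.mem_sdiff.1 hyE.1).1
            have hyY : y ∉ Y := (Finset.mem_sdiff.1 hyE.1).2
            refine hC1 x0.1 y.1 p ?_ ?_ ?_ ?_ ?_ ?_
            · rw [← hx0p]; exact hx0Y
            · rw [← hx0p]; exact hx0X
            · rw [← hx0p]; exact hPAx0
            · rw [← hyp]; exact hyX
            · rw [← hyp]; exact hyY
            · rw [← hyp]; exact hyB.2
          have hnBp : nBk.filter (fun x => x.2 = p) = Ek.filter (fun x => x.2 = p) := by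
            ext y
            constructor
            · intro hy
              have hy' := Finset.mem_filter.1 hy
              exact Finset.mem_filter.2 ⟨(Finset.mem_filter.1 hy'.1).1, hy'.2⟩
            · intro hy
              have hy' := Finset.mem_filter.1 hy
              refine Finset.mem_filter.2 ⟨Finset.mem_filter.2 ⟨hy'.1, ?_⟩, hy'.2⟩
              intro hPBy
              have : y ∈ Bk.filter (fun x => x.2 = p) :=
                Finset.mem_filter.2 ⟨Finset.mem_filter.2 ⟨hy'.1, hPBy⟩, hy'.2⟩
              rw [hBempty] at this
              exact absurd this (Finset.notMem_empty y)
          calc (SAk.filter (fun x => x.2 = p)).card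
              ≤ (Dk.filter (fun x => x.2 = p)).card :=
                Finset.card_le_card (Finset.filter_subset_filter _ (Finset.filter_subset _ _))
            _ = ((Y \ X).filter (fun x => x.2 = p)).card := by
                rw [hDkdef, filter_snd_eq I hpk]
            _ ≤ ((X \ Y).filter (fun x => x.2 = p)).card := by
                apply DE_le X Y
                rw [hXc]
                exact hYm.2.2.1 p
            _ = (Ek.filter (fun x => x.2 = p)).card := by
                rw [hEkdef, filter_snd_eq I hpk]
            _ = (nBk.filter (fun x => x.2 = p)).card := by rw [hnBp]
        · rw [Finset.not_nonempty_iff_eq_empty.1 hSA]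
          simp
      · refine ⟨q0, hq0FK, ?_⟩
        calc (SAk.filter (fun x => x.2 = q0)).card
            < (Dk.filter (fun x => x.2 = q0)).card := hSAq0lt
          _ = ((Y \ X).filter (fun x => x.2 = q0)).card := by
              rw [hDkdef, filter_snd_eq I hkdef.symm]
          _ ≤ ((X \ Y).filter (fun x => x.2 = q0)).card := by
              apply DE_le X Y
              rw [hXc0]
              exact hYm.2.2.1 q0
          _ = (Ek.filter (fun x => x.2 = q0)).card := by
              rw [hEkdef, filter_snd_eq I hkdef.symm]
          _ = (nBk.filter (fun x => x.2 = q0)).card := by rw [hnBq0]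
    omega
  · push_neg at hbb
    rw [sum_fiber I hBk_lec, sum_fiber I hSAk_lec, sum_fiber I hDk_lec,
      ← Finset.sum_add_distrib]
    apply Finset.sum_lt_sum
    · intro p hp
      have hpk : I.lec p = k := (Finset.mem_filter.1 hp).2
      by_cases hBp : (Bk.filter (fun x => x.2 = p)).Nonempty
      · obtain ⟨y0, hy0⟩ := hBp
        have hy0' := Finset.mem_filter.1 hy0
        have hy0p : y0.2 = p := hy0'.2
        have hy0B := Finset.mem_filter.1 hy0'.1
        have hy0E := Finset.mem_filter.1 hy0B.1
        have hy0X : y0 ∈ X := (Finset.mem_sdiff.1 hy0E.1).1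
        have hy0Y : y0 ∉ Y := (Finset.mem_sdiff.1 hy0E.1).2
        have hYc : (Y.filter (fun x => x.2 = p)).card = I.c p := by
          have h := hbb y0.1 y0.2 hy0X hy0Y hy0B.2 (by rw [hy0p]; exact hpk)
          rwa [hy0p] at h
        have hSAempty : SAk.filter (fun x => x.2 = p) = ∅ := by
          apply Finset.eq_empty_of_forall_notMem
          intro x hx
          have hx' := Finset.mem_filter.1 hx
          have hxp : x.2 = p := hx'.2
          have hxSA := Finset.mem_filter.1 hx'.1
          have hxD := Finset.mem_filter.1 hxSA.1
          have hxY : x ∈ Y := (Finset.mem_sdiff.1 hxD.1).1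
          have hxX : x ∉ X := (Finset.mem_sdiff.1 hxD.1).2
          refine hC1 x.1 y0.1 p ?_ ?_ ?_ ?_ ?_ ?_
          · rw [← hxp]; exact hxY
          · rw [← hxp]; exact hxX
          · rw [← hxp]; exact hxSA.2.1
          · rw [← hy0p]; exact hy0X
          · rw [← hy0p]; exact hy0Y
          · rw [← hy0p]; exact hy0B.2
        rw [hSAempty]
        simp only [Finset.card_empty, add_zero]
        calc (Bk.filter (fun x => x.2 = p)).card
            ≤ (Ek.filter (fun x => x.2 = p)).card :=
              Finset.card_le_card (Finset.filter_subset_filter _ (Finset.filter_subset _ _))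
          _ = ((X \ Y).filter (fun x => x.2 = p)).card := by
              rw [hEkdef, filter_snd_eq I hpk]
          _ ≤ ((Y \ X).filter (fun x => x.2 = p)).card := by
              apply DE_le Y X
              rw [hYc]
              exact hXm.2.2.1 p
          _ = (Dk.filter (fun x => x.2 = p)).card := by
              rw [hDkdef, filter_snd_eq I hpk]
      · rw [Finset.not_nonempty_iff_eq_empty.1 hBp]
        simp only [Finset.card_empty, zero_add]
        exact Finset.card_le_card (Finset.filter_subset_filter _ (Finset.filter_subset _ _))
    · refine ⟨q0, hq0FK, ?_⟩
      have hBq0empty : Bk.filter (fun x => x.2 = q0) = ∅ := by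
        apply Finset.eq_empty_of_forall_notMem
        intro y hy
        have hy' := Finset.mem_filter.1 hy
        have hyp : y.2 = q0 := hy'.2
        have hyB := Finset.mem_filter.1 hy'.1
        have hyE := Finset.mem_filter.1 hyB.1
        have hyX : y ∈ X := (Finset.mem_sdiff.1 hyE.1).1
        have hyY : y ∉ Y := (Finset.mem_sdiff.1 hyE.1).2
        refine hC1 s0 y.1 q0 hs0Y hs0X hPA0 ?_ ?_ ?_
        · rw [← hyp]; exact hyX
        · rw [← hyp]; exact hyY
        · rw [← hyp]; exact hyB.2
      rw [hBq0empty]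
      simpa using hSAq0lt
end SPASTAux

namespace SPASTAux
open SPAST Finset
set_option linter.unusedSectionVars false
set_option maxHeartbeats 1000000

variable {S P L : Type} [Fintype S] [Fintype P] [Fintype L]
  [DecidableEq S] [DecidableEq P] [DecidableEq L]

lemma card_nB_eq_SA (I : SPAST S P L) (X Y : Finset (S × P)) (PA PB : S → P → Prop)
    (hXm : I.IsMatching X) (hYm : I.IsMatching Y)
    (hPBun : ∀ w p, (w, p) ∈ X → (∀ r, (w, r) ∉ Y) → PB w p)
    (hAB : ∀ t p r, (t, p) ∈ X → (t, r) ∈ Y → (¬ PB t p ↔ PA t r)) :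
    ((X \ Y).filter (fun x => ¬ PB x.1 x.2)).card =
      ((Y \ X).filter (fun x => PA x.1 x.2 ∧ ∃ r, (x.1, r) ∈ X)).card := by
  classical
  set nB := (X \ Y).filter (fun x => ¬ PB x.1 x.2) with hnB
  set SA := (Y \ X).filter (fun x => PA x.1 x.2 ∧ ∃ r, (x.1, r) ∈ X) with hSA
  have hnBcard : (nB.image Prod.fst).card = nB.card := by
    apply Finset.card_image_of_injOn
    intro x hx y hy hxy
    have hxX : x ∈ X := (Finset.mem_sdiff.1 (Finset.mem_filter.1 hx).1).1
    have hyX : y ∈ X := (Finset.mem_sdiff.1 (Finset.mem_filter.1 hy).1).1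
    exact Prod.ext hxy (hXm.2.1 x.1 x.2 y.2 hxX (by rw [hxy]; exact hyX))
  have hSAcard : (SA.image Prod.fst).card = SA.card := by
    apply Finset.card_image_of_injOn
    intro x hx y hy hxy
    have hxY : x ∈ Y := (Finset.mem_sdiff.1 (Finset.mem_filter.1 hx).1).1
    have hyY : y ∈ Y := (Finset.mem_sdiff.1 (Finset.mem_filter.1 hy).1).1
    exact Prod.ext hxy (hYm.2.1 x.1 x.2 y.2 hxY (by rw [hxy]; exact hyY))
  have himg : nB.image Prod.fst = SA.image Prod.fst := by
    ext s
    simp only [Finset.mem_image]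
    constructor
    · rintro ⟨x, hx, rfl⟩
      have hx' := Finset.mem_filter.1 hx
      have hxX : x ∈ X := (Finset.mem_sdiff.1 hx'.1).1
      have hxY : x ∉ Y := (Finset.mem_sdiff.1 hx'.1).2
      have hmY : ∃ r, (x.1, r) ∈ Y := by
        by_contra hc
        push_neg at hc
        exact hx'.2 (hPBun x.1 x.2 hxX hc)
      obtain ⟨r, hr⟩ := hmY
      have hrX : (x.1, r) ∉ X := by
        intro hrX
        have : x.2 = r := hXm.2.1 x.1 x.2 r hxX hrX
        rw [← this] at hr
        exact hxY hr
      refine ⟨(x.1, r), ?_, rfl⟩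
      refine Finset.mem_filter.2 ⟨Finset.mem_sdiff.2 ⟨hr, hrX⟩, ?_, ⟨x.2, hxX⟩⟩
      exact (hAB x.1 x.2 r hxX hr).1 hx'.2
    · rintro ⟨x, hx, rfl⟩
      have hx' := Finset.mem_filter.1 hx
      have hxY : x ∈ Y := (Finset.mem_sdiff.1 hx'.1).1
      have hxX : x ∉ X := (Finset.mem_sdiff.1 hx'.1).2
      obtain ⟨p, hp⟩ := hx'.2.2
      have hpY : (x.1, p) ∉ Y := by
        intro hpY
        have : p = x.2 := hYm.2.1 x.1 p x.2 hpY hxY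
        rw [this] at hp
        exact hxX hp
      refine ⟨(x.1, p), ?_, rfl⟩
      refine Finset.mem_filter.2 ⟨Finset.mem_sdiff.2 ⟨hp, hpY⟩, ?_⟩
      exact (hAB x.1 p x.2 hp hxY).2 hx'.2.1
  rw [← hnBcard, ← hSAcard, himg]

lemma gen_le (I : SPAST S P L) (X Y : Finset (S × P)) (PA PB : S → P → Prop)
    (hXm : I.IsMatching X) (hYm : I.IsMatching Y)
    (hPBun : ∀ w p, (w, p) ∈ X → (∀ r, (w, r) ∉ Y) → PB w p)
    (hAB : ∀ t p r, (t, p) ∈ X → (t, r) ∈ Y → (¬ PB t p ↔ PA t r))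
    (hC1 : ∀ u w q, (u, q) ∈ Y → (u, q) ∉ X → PA u q →
      (w, q) ∈ X → (w, q) ∉ Y → PB w q → False)
    (hC2 : ∀ u q w p, (u, q) ∈ Y → (u, q) ∉ X → PA u q →
      (X.filter (fun x => x.2 = q)).card ≠ I.c q →
      (w, p) ∈ X → (w, p) ∉ Y → PB w p →
      (Y.filter (fun x => x.2 = p)).card ≠ I.c p →
      I.lec q = I.lec p → False)
    (hFullB : ∀ w p, (w, p) ∈ X → (w, p) ∉ Y → PB w p →
      (Y.filter (fun x => x.2 = p)).card ≠ I.c p →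
      (Y.filter (fun x => I.lec x.2 = I.lec p)).card = I.d (I.lec p)) :
    (X \ Y).card ≤ (Y \ X).card := by
  classical
  have hpart : ((X \ Y).filter (fun x => PB x.1 x.2)).card +
      ((X \ Y).filter (fun x => ¬ PB x.1 x.2)).card = (X \ Y).card :=
    Finset.card_filter_add_card_filter_not (p := fun x : S × P => PB x.1 x.2)
  have hnBSA := card_nB_eq_SA I X Y PA PB hXm hYm hPBun hAB
  have hBsum : ((X \ Y).filter (fun x => PB x.1 x.2)).card =
      ∑ k ∈ (Finset.univ : Finset L),
        (((X \ Y).filter (fun x => I.lec x.2 = k)).filter (fun x => PB x.1 x.2)).card := by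
    rw [sum_lec I ((X \ Y).filter (fun x => PB x.1 x.2))]
    apply Finset.sum_congr rfl
    intro k _
    rw [Finset.filter_comm]
  have hSAsum : ((Y \ X).filter (fun x => PA x.1 x.2 ∧ ∃ r, (x.1, r) ∈ X)).card =
      ∑ k ∈ (Finset.univ : Finset L),
        (((Y \ X).filter (fun x => I.lec x.2 = k)).filter
          (fun x => PA x.1 x.2 ∧ ∃ r, (x.1, r) ∈ X)).card := by
    rw [sum_lec I ((Y \ X).filter (fun x => PA x.1 x.2 ∧ ∃ r, (x.1, r) ∈ X))]
    apply Finset.sum_congr rfl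
    intro k _
    rw [Finset.filter_comm]
  have hDsum : (Y \ X).card =
      ∑ k ∈ (Finset.univ : Finset L), ((Y \ X).filter (fun x => I.lec x.2 = k)).card :=
    sum_lec I (Y \ X)
  calc (X \ Y).card
      = ((X \ Y).filter (fun x => PB x.1 x.2)).card +
        ((Y \ X).filter (fun x => PA x.1 x.2 ∧ ∃ r, (x.1, r) ∈ X)).card := by
        rw [← hnBSA, hpart]
    _ = ∑ k ∈ (Finset.univ : Finset L),
          ((((X \ Y).filter (fun x => I.lec x.2 = k)).filter (fun x => PB x.1 x.2)).card +
           (((Y \ X).filter (fun x => I.lec x.2 = k)).filter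
             (fun x => PA x.1 x.2 ∧ ∃ r, (x.1, r) ∈ X)).card) := by
        rw [Finset.sum_add_distrib, ← hBsum, ← hSAsum]
    _ ≤ ∑ k ∈ (Finset.univ : Finset L), ((Y \ X).filter (fun x => I.lec x.2 = k)).card :=
        Finset.sum_le_sum (fun k _ => star I X Y PA PB hXm hYm hC1 hC2 hFullB k)
    _ = (Y \ X).card := hDsum.symm

lemma gen_lt (I : SPAST S P L) (X Y : Finset (S × P)) (PA PB : S → P → Prop)
    (hXm : I.IsMatching X) (hYm : I.IsMatching Y)
    (hPBun : ∀ w p, (w, p) ∈ X → (∀ r, (w, r) ∉ Y) → PB w p)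
    (hAB : ∀ t p r, (t, p) ∈ X → (t, r) ∈ Y → (¬ PB t p ↔ PA t r))
    (hC1 : ∀ u w q, (u, q) ∈ Y → (u, q) ∉ X → PA u q →
      (w, q) ∈ X → (w, q) ∉ Y → PB w q → False)
    (hC2 : ∀ u q w p, (u, q) ∈ Y → (u, q) ∉ X → PA u q →
      (X.filter (fun x => x.2 = q)).card ≠ I.c q →
      (w, p) ∈ X → (w, p) ∉ Y → PB w p →
      (Y.filter (fun x => x.2 = p)).card ≠ I.c p →
      I.lec q = I.lec p → False)
    (hFullB : ∀ w p, (w, p) ∈ X → (w, p) ∉ Y → PB w p →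
      (Y.filter (fun x => x.2 = p)).card ≠ I.c p →
      (Y.filter (fun x => I.lec x.2 = I.lec p)).card = I.d (I.lec p))
    (s0 : S) (q0 : P) (hs0Y : (s0, q0) ∈ Y) (hs0X : (s0, q0) ∉ X)
    (hPA0 : PA s0 q0) (hun : ∀ r, (s0, r) ∉ X) :
    (X \ Y).card < (Y \ X).card := by
  classical
  have hpart : ((X \ Y).filter (fun x => PB x.1 x.2)).card +
      ((X \ Y).filter (fun x => ¬ PB x.1 x.2)).card = (X \ Y).card :=
    Finset.card_filter_add_card_filter_not (p := fun x : S × P => PB x.1 x.2)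
  have hnBSA := card_nB_eq_SA I X Y PA PB hXm hYm hPBun hAB
  have hBsum : ((X \ Y).filter (fun x => PB x.1 x.2)).card =
      ∑ k ∈ (Finset.univ : Finset L),
        (((X \ Y).filter (fun x => I.lec x.2 = k)).filter (fun x => PB x.1 x.2)).card := by
    rw [sum_lec I ((X \ Y).filter (fun x => PB x.1 x.2))]
    apply Finset.sum_congr rfl
    intro k _
    rw [Finset.filter_comm]
  have hSAsum : ((Y \ X).filter (fun x => PA x.1 x.2 ∧ ∃ r, (x.1, r) ∈ X)).card =
      ∑ k ∈ (Finset.univ : Finset L),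
        (((Y \ X).filter (fun x => I.lec x.2 = k)).filter
          (fun x => PA x.1 x.2 ∧ ∃ r, (x.1, r) ∈ X)).card := by
    rw [sum_lec I ((Y \ X).filter (fun x => PA x.1 x.2 ∧ ∃ r, (x.1, r) ∈ X))]
    apply Finset.sum_congr rfl
    intro k _
    rw [Finset.filter_comm]
  have hDsum : (Y \ X).card =
      ∑ k ∈ (Finset.univ : Finset L), ((Y \ X).filter (fun x => I.lec x.2 = k)).card :=
    sum_lec I (Y \ X)
  calc (X \ Y).card
      = ((X \ Y).filter (fun x => PB x.1 x.2)).card +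
        ((Y \ X).filter (fun x => PA x.1 x.2 ∧ ∃ r, (x.1, r) ∈ X)).card := by
        rw [← hnBSA, hpart]
    _ = ∑ k ∈ (Finset.univ : Finset L),
          ((((X \ Y).filter (fun x => I.lec x.2 = k)).filter (fun x => PB x.1 x.2)).card +
           (((Y \ X).filter (fun x => I.lec x.2 = k)).filter
             (fun x => PA x.1 x.2 ∧ ∃ r, (x.1, r) ∈ X)).card) := by
        rw [Finset.sum_add_distrib, ← hBsum, ← hSAsum]
    _ < ∑ k ∈ (Finset.univ : Finset L), ((Y \ X).filter (fun x => I.lec x.2 = k)).card :=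
        Finset.sum_lt_sum (fun k _ => star I X Y PA PB hXm hYm hC1 hC2 hFullB k)
          ⟨I.lec q0, Finset.mem_univ _,
            star_lt I X Y PA PB hXm hYm hC1 hC2 hFullB s0 q0 hs0Y hs0X hPA0 hun⟩
    _ = (Y \ X).card := hDsum.symm

end SPASTAux

namespace SPASTAux
open SPAST Finset
set_option linter.unusedSectionVars false
set_option maxHeartbeats 1000000

variable {S P L : Type} [Fintype S] [Fintype P] [Fintype L]
  [DecidableEq S] [DecidableEq P] [DecidableEq L]

/-- the "does not strictly prefer her `M`-partner to `q`" condition -/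
def Acnd (I : SPAST S P L) (M : Finset (S × P)) (s : S) (q : P) : Prop :=
  ∀ r, (s, r) ∈ M → ¬(I.sPref s r q ∧ ¬ I.sPref s q r)

/-- the "strictly prefers `p` to her `M'`-partner" condition -/
def Bcnd (I : SPAST S P L) (M' : Finset (S × P)) (t : S) (p : P) : Prop :=
  ∀ r, (t, r) ∈ M' → (I.sPref t p r ∧ ¬ I.sPref t r p)

section Bridge

variable {I : SPAST S P L} {M M' : Finset (S × P)}
variable (hM : SuperStable I M) (hM' : WeaklyStable I M')

lemma bridge_AB1 {t : S} {p r : P} (hMm : I.IsMatching M) (hM'm : I.IsMatching M')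
    (htp : (t, p) ∈ M) (htr : (t, r) ∈ M') :
    (¬ Bcnd I M' t p ↔ Acnd I M t r) := by
  constructor
  · intro hnB r' hr' hstr
    have hre : r' = p := hMm.2.1 t r' p hr' htp
    subst hre
    apply hnB
    intro r'' hr''
    have : r'' = r := hM'm.2.1 t r'' r hr'' htr
    subst this
    exact hstr
  · intro hA hB
    exact hA p htp (hB r htr)

lemma bridge_AB2 {t : S} {p r : P} (hMm : I.IsMatching M) (hM'm : I.IsMatching M')
    (htp : (t, p) ∈ M') (htr : (t, r) ∈ M) :
    (¬ Acnd I M t p ↔ Bcnd I M' t r) := by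
  constructor
  · intro hnA
    have hstr : I.sPref t r p ∧ ¬ I.sPref t p r := by
      by_contra hc
      apply hnA
      intro r' hr' hstr'
      have : r' = r := hMm.2.1 t r' r hr' htr
      subst this
      exact hc hstr'
    intro p' hp'
    have : p' = p := hM'm.2.1 t p' p hp' htp
    subst this
    exact hstr
  · intro hB hA
    exact hA r htr (hB p htp)

include hM hM' in
lemma main_same_matched (s : S) :
    (∃ p, (s, p) ∈ M') ↔ (∃ p, (s, p) ∈ M) := by
  classical
  have hMm := hM.1
  have hM'm := hM'.1
  -- hypotheses for instantiation 1 : X = M, Y = M'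
  have hC1a : ∀ u w q, (u, q) ∈ M' → (u, q) ∉ M → Acnd I M u q →
      (w, q) ∈ M → (w, q) ∉ M' → Bcnd I M' w q → False :=
    fun u w q h1 h2 h3 h4 h5 h6 => conflictProj hM hM' h1 h2 h3 h4 h5 h6
  have hC2a : ∀ u q w p, (u, q) ∈ M' → (u, q) ∉ M → Acnd I M u q →
      (M.filter (fun x => x.2 = q)).card ≠ I.c q →
      (w, p) ∈ M → (w, p) ∉ M' → Bcnd I M' w p →
      (M'.filter (fun x => x.2 = p)).card ≠ I.c p →
      I.lec q = I.lec p → False := by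
    intro u q w p h1 h2 h3 h4 h5 h6 h7 h8 h9
    refine conflictLec hM hM' h1 h2 h3 ?_ h5 h6 h7 ?_ h9
    · rw [card_projAsg]; exact h4
    · rw [card_projAsg]; exact h8
  have hFullBa : ∀ w p, (w, p) ∈ M → (w, p) ∉ M' → Bcnd I M' w p →
      (M'.filter (fun x => x.2 = p)).card ≠ I.c p →
      (M'.filter (fun x => I.lec x.2 = I.lec p)).card = I.d (I.lec p) := by
    intro w p h1 h2 h3 h4
    have hcb := (certB hM' hMm h1 h2 h3).resolve_left
      (fun h => h4 (by rw [← card_projAsg]; exact h.1))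
    rw [← card_lecAsg hM'.1]
    exact hcb.2.1
  have hPBuna : ∀ w p, (w, p) ∈ M → (∀ r, (w, r) ∉ M') → Bcnd I M' w p :=
    fun w p _ h r hr => absurd hr (h r)
  have hABa : ∀ t p r, (t, p) ∈ M → (t, r) ∈ M' →
      (¬ Bcnd I M' t p ↔ Acnd I M t r) :=
    fun t p r h1 h2 => bridge_AB1 hMm hM'm h1 h2
  -- hypotheses for instantiation 2 : X = M', Y = M
  have hC1b : ∀ u w q, (u, q) ∈ M → (u, q) ∉ M' → Bcnd I M' u q →
      (w, q) ∈ M' → (w, q) ∉ M → Acnd I M w q → False :=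
    fun u w q h1 h2 h3 h4 h5 h6 => conflictProj hM hM' h4 h5 h6 h1 h2 h3
  have hC2b : ∀ u q w p, (u, q) ∈ M → (u, q) ∉ M' → Bcnd I M' u q →
      (M'.filter (fun x => x.2 = q)).card ≠ I.c q →
      (w, p) ∈ M' → (w, p) ∉ M → Acnd I M w p →
      (M.filter (fun x => x.2 = p)).card ≠ I.c p →
      I.lec q = I.lec p → False := by
    intro u q w p h1 h2 h3 h4 h5 h6 h7 h8 h9
    refine conflictLec hM hM' h5 h6 h7 ?_ h1 h2 h3 ?_ h9.symm
    · rw [card_projAsg]; exact h8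
    · rw [card_projAsg]; exact h4
  have hFullBb : ∀ w p, (w, p) ∈ M' → (w, p) ∉ M → Acnd I M w p →
      (M.filter (fun x => x.2 = p)).card ≠ I.c p →
      (M.filter (fun x => I.lec x.2 = I.lec p)).card = I.d (I.lec p) := by
    intro w p h1 h2 h3 h4
    have hca := (certA hM hM'.1 h1 h2 h3).resolve_left
      (fun h => h4 (by rw [← card_projAsg]; exact h.1))
    rw [← card_lecAsg hM.1]
    exact hca.2.1
  have hPBunb : ∀ w p, (w, p) ∈ M' → (∀ r, (w, r) ∉ M) → Acnd I M w p :=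
    fun w p _ h r hr _ => absurd hr (h r)
  have hABb : ∀ t p r, (t, p) ∈ M' → (t, r) ∈ M →
      (¬ Acnd I M t p ↔ Bcnd I M' t r) :=
    fun t p r h1 h2 => bridge_AB2 hMm hM'm h1 h2
  have hle1 : (M \ M').card ≤ (M' \ M).card :=
    gen_le I M M' (Acnd I M) (Bcnd I M') hMm hM'm hPBuna hABa hC1a hC2a hFullBa
  have hle2 : (M' \ M).card ≤ (M \ M').card :=
    gen_le I M' M (Bcnd I M') (Acnd I M) hM'm hMm hPBunb hABb hC1b hC2b hFullBb
  constructor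
  · rintro ⟨q0, hq0⟩
    by_contra hc
    push_neg at hc
    have hlt : (M \ M').card < (M' \ M).card :=
      gen_lt I M M' (Acnd I M) (Bcnd I M') hMm hM'm hPBuna hABa hC1a hC2a hFullBa
        s q0 hq0 (hc q0) (fun r hr _ => absurd hr (hc r)) hc
    omega
  · rintro ⟨p0, hp0⟩
    by_contra hc
    push_neg at hc
    have hlt : (M' \ M).card < (M \ M').card :=
      gen_lt I M' M (Bcnd I M') (Acnd I M) hM'm hMm hPBunb hABb hC1b hC2b hFullBb
        s p0 hp0 (hc p0) (fun r hr => absurd hr (hc r)) hc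
    omega

end Bridge

end SPASTAux

open SPAST in
theorem weakly_stable_same_matched_students_and_card {S P L : Type} [Fintype S] [Fintype P] [Fintype L]
    [DecidableEq S] [DecidableEq P] [DecidableEq L]
    (I : SPAST S P L) (hss : ∃ M : Finset (S × P), SuperStable I M)
    (M1 M2 : Finset (S × P)) (h1 : WeaklyStable I M1) (h2 : WeaklyStable I M2) :
    (∀ s : S, (∃ p : P, (s, p) ∈ M1) ↔ (∃ p : P, (s, p) ∈ M2)) ∧
      M1.card = M2.card := by
  classical
  obtain ⟨M, hM⟩ := hss
  have hs1 : ∀ s : S, (∃ p, (s, p) ∈ M1) ↔ (∃ p, (s, p) ∈ M) :=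
    fun s => SPASTAux.main_same_matched hM h1 s
  have hs2 : ∀ s : S, (∃ p, (s, p) ∈ M2) ↔ (∃ p, (s, p) ∈ M) :=
    fun s => SPASTAux.main_same_matched hM h2 s
  have hiff : ∀ s : S, (∃ p : P, (s, p) ∈ M1) ↔ (∃ p : P, (s, p) ∈ M2) :=
    fun s => (hs1 s).trans (hs2 s).symm
  refine ⟨hiff, ?_⟩
  have himg : ∀ (N : Finset (S × P)), ∀ s : S,
      s ∈ N.image Prod.fst ↔ ∃ p, (s, p) ∈ N := by
    intro N s
    simp only [Finset.mem_image]
    constructor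
    · rintro ⟨x, hx, rfl⟩
      exact ⟨x.2, hx⟩
    · rintro ⟨p, hp⟩
      exact ⟨(s, p), hp, rfl⟩
  have hcard : ∀ (N : Finset (S × P)), I.IsMatching N →
      N.card = (N.image Prod.fst).card := by
    intro N hm
    symm
    apply Finset.card_image_of_injOn
    intro x hx y hy hxy
    exact Prod.ext hxy (hm.2.1 x.1 x.2 y.2 hx (by rw [hxy]; exact hy))
  have himgeq : M1.image Prod.fst = M2.image Prod.fst := by
    ext s
    rw [himg, himg]
    exact hiff s
  rw [hcard M1 h1.1, hcard M2 h2.1, himgeq]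
end
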